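/- arXiv:math/0607589 — 4 statements merged into one kernel-verified Lean document; each statement's English description precedes it below -/
import Mathlib

section
/- In the symmetric group $S_n$, if $w$ is the longest element of a standard parabolic (Young) subgroup of type corresponding to the composition $\lambda$ of $n$, then the Robinson–Schensted correspondence associates to $w$ a pair of standard Young tableaux whose common shape is the conjugate partition $\lambda'$ of $\lambda$. -/
/-! Row insertion for the Robinson–Schensted correspondence. -/

/-- Insert `x` into a row `r`: returns the new row and the bumped entry, if any. -/
def rsInsertRow (r : List ℕ) (x : ℕ) : List ℕ × Option ℕ :=
  match r.findIdx? (fun y => x < y) with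
  | none => (r ++ [x], none)
  | some i => (r.set i x, some (r.getD i 0))

/-- Insert `x` into a tableau (list of rows); returns the new tableau together with the
index of the row in which a new box was created. -/
def rsInsertTab : List (List ℕ) → ℕ → List (List ℕ) × ℕ
  | [], x => ([[x]], 0)
  | r :: rs, x =>
    match rsInsertRow r x with
    | (r', none) => (r' :: rs, 0)
    | (r', some y) =>
      let (t, k) := rsInsertTab rs y
      (r' :: t, k + 1)

/-- Auxiliary function building the insertion tableau `P` and the recording tableau `Q`. -/
def rsAux : List (List ℕ) → List (List ℕ) → ℕ → List ℕ → List (List ℕ) × List (List ℕ)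
  | P, Q, _, [] => (P, Q)
  | P, Q, k, x :: xs =>
    let (P', r) := rsInsertTab P x
    let Q' := if r < Q.length then Q.set r (Q.getD r [] ++ [k]) else Q ++ [[k]]
    rsAux P' Q' (k + 1) xs

/-- The pair `(P, Q)` of tableaux associated to a word by the Robinson–Schensted
correspondence. -/
def rsPair (w : List ℕ) : List (List ℕ) × List (List ℕ) := rsAux [] [] 1 w

/-- The shape of a tableau, as the list of its row lengths. -/
def tabShape (t : List (List ℕ)) : List ℕ := t.map List.length

/-- The word (one-line notation) of the longest element of the Young subgroup of type `lam`:
each consecutive block of sizes `lam₁, lam₂, …` is reversed. -/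
def youngLongestWord : ℕ → List ℕ → List ℕ
  | _, [] => []
  | off, p :: rest =>
      ((List.range p).reverse.map (fun j => off + j + 1)) ++ youngLongestWord (off + p) rest

/-- The conjugate partition of a composition `lam`: its `i`-th part is the number of parts of
`lam` that are greater than `i`. -/
def conjPartition (lam : List ℕ) : List ℕ :=
  (List.range (lam.foldr max 0)).map (fun i => lam.countP (fun p => i < p))

def rowsWith (x : ℕ) : List (List ℕ) → List (List ℕ)
  | [] => []
  | a :: as => (a ++ [x]) :: rowsWith (x+1) as

def pushRow (v : ℕ) : List (List ℕ) → List (List ℕ)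
  | [] => [[v]]
  | r :: rs => (r ++ [v]) :: rs

lemma shape_getD (P : List (List ℕ)) (i : ℕ) :
    (tabShape P).getD i 0 = (P.getD i []).length := by
  by_cases h : i < P.length
  · rw [tabShape, List.getD_eq_getElem _ _ (by simpa using h), List.getD_eq_getElem _ _ h,
      List.getElem_map]
  · rw [List.getD_eq_default _ _ (by simp [tabShape]; omega),
      List.getD_eq_default _ _ (Nat.le_of_not_lt h)]
    simp

lemma shape_rowsWith (as : List (List ℕ)) : ∀ x, tabShape (rowsWith x as)
    = as.map (fun a => a.length + 1) := by
  induction as with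
  | nil => intro x; rfl
  | cons a as ih => intro x; simp [rowsWith, tabShape, List.map_cons] at *; exact ih (x+1)

lemma map_len_rowsWith (as : List (List ℕ)) (x : ℕ) :
    (rowsWith x as).map List.length = as.map (fun a => a.length + 1) :=
  shape_rowsWith as x

lemma length_rowsWith (as : List (List ℕ)) : ∀ x, (rowsWith x as).length = as.length := by
  induction as with
  | nil => intro x; rfl
  | cons a as ih => intro x; simp [rowsWith, ih (x+1)]

lemma rowsWith_append_single (as : List (List ℕ)) : ∀ x b,
    rowsWith x (as ++ [b]) = rowsWith x as ++ [b ++ [x + as.length]] := by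
  induction as with
  | nil => intro x b; simp [rowsWith]
  | cons a as ih =>
    intro x b
    show (a ++ [x]) :: rowsWith (x+1) (as ++ [b]) = _
    rw [ih (x+1) b]
    simp only [List.length_cons, List.cons_append]
    have : x + 1 + as.length = x + (as.length + 1) := by omega
    rw [this]
    simp [rowsWith]

lemma rowsWith_pushRow (as rest : List (List ℕ)) (x : ℕ) :
    rowsWith x as ++ pushRow (x + as.length) rest
      = rowsWith x (as ++ [rest.headD []]) ++ rest.tail := by
  cases rest with
  | nil => simp [pushRow, rowsWith_append_single]
  | cons r rs => simp [pushRow, rowsWith_append_single]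

lemma findIdx?_ge : ∀ (a : List ℕ) (b x i : ℕ), (∀ y ∈ a, y ≤ x) → x < b →
    List.findIdx?.go (fun y => x < y) (a ++ [b]) i = some (i + a.length) := by
  intro a
  induction a with
  | nil => intro b x i _ hb; simp [List.findIdx?.go, hb]
  | cons a0 a ih =>
    intro b x i h hb
    have h0 : ¬ x < a0 := Nat.not_lt.mpr (h a0 (by simp))
    simp only [List.cons_append, List.findIdx?.go, h0, decide_false,
      Bool.false_eq_true, if_false]
    rw [ih b x (i+1) (fun y hy => h y (by simp [hy])) hb]
    congr 1
    simp; omega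

lemma rsInsertRow_append (r : List ℕ) (x : ℕ) (h : ∀ y ∈ r, y ≤ x) :
    rsInsertRow r x = (r ++ [x], none) := by
  have : r.findIdx? (fun y => x < y) = none := by
    rw [List.findIdx?_eq_none_iff]
    intro y hy
    simpa using Nat.not_lt.mpr (h y hy)
  simp [rsInsertRow, this]

lemma set_append_mid {α} (L : List α) (a v : α) (R : List α) :
    (L ++ a :: R).set L.length v = L ++ v :: R := by
  induction L with
  | nil => rfl
  | cons l L ih => simp [List.set, ih]

lemma getD_append_mid {α} (L : List α) (a : α) (R : List α) (d : α) :
    (L ++ a :: R).getD L.length d = a := by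
  rw [List.getD_eq_getElem _ _ (by simp), List.getElem_append_right (le_refl _)]
  simp

lemma rsInsertRow_bump (a : List ℕ) (b x : ℕ) (h : ∀ y ∈ a, y ≤ x) (hb : x < b) :
    rsInsertRow (a ++ [b]) x = (a ++ [x], some b) := by
  have hf : (a ++ [b]).findIdx? (fun y => x < y) = some a.length := by
    unfold List.findIdx?; simpa using findIdx?_ge a b x 0 h hb
  simp only [rsInsertRow, hf]
  rw [show a ++ [b] = a ++ b :: [] from rfl, set_append_mid, getD_append_mid]

lemma cascade : ∀ (as : List (List ℕ)) (rest : List (List ℕ)) (x off : ℕ),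
    off < x → (∀ a ∈ as, ∀ y ∈ a, y ≤ off) → (∀ y ∈ rest.headD [], y ≤ off) →
    rsInsertTab (rowsWith (x+1) as ++ rest) x
      = (rowsWith x as ++ pushRow (x + as.length) rest, as.length) := by
  intro as
  induction as with
  | nil =>
    intro rest x off hx _ hhead
    cases rest with
    | nil => simp [rowsWith, rsInsertTab, pushRow]
    | cons r rs =>
      have := rsInsertRow_append r x (fun y hy => le_trans (hhead y (by simpa using hy)) (le_of_lt hx))
      simp [rowsWith, rsInsertTab, this, pushRow]
  | cons a as ih =>
    intro rest x off hx h hhead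
    have hrow := rsInsertRow_bump a (x+1) x (fun y hy => le_trans (h a (by simp) y hy) (le_of_lt hx)) (by omega)
    show rsInsertTab ((a ++ [x+1]) :: (rowsWith (x+2) as ++ rest)) x = _
    rw [rsInsertTab]
    simp only [hrow]
    have ihh := ih rest (x+1) off (by omega) (fun b hb => h b (by simp [hb])) hhead
    rw [show rowsWith (x+1+1) as = rowsWith (x+2) as from rfl] at ihh
    rw [ihh]
    simp [rowsWith, pushRow]
    have : x + 1 + as.length = x + (as.length + 1) := by omega
    rw [this]

def padTake (q : ℕ) (P : List (List ℕ)) : List (List ℕ) :=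
  P.take q ++ List.replicate (q - P.length) []

lemma eqD {a b : List ℕ} (hl : a.length = b.length) (h : ∀ i, a.getD i 0 = b.getD i 0) :
    a = b := by
  refine List.ext_getElem hl fun n h1 h2 => ?_
  rw [← List.getD_eq_getElem a 0 h1, ← List.getD_eq_getElem b 0 h2]; exact h n

lemma getD_map_range (f : ℕ → ℕ) (n i : ℕ) :
    ((List.range n).map f).getD i 0 = if i < n then f i else 0 := by
  by_cases h : i < n
  · rw [List.getD_eq_getElem _ _ (by simpa using h)]
    simp [h]
  · rw [List.getD_eq_default _ _ (by simpa using Nat.le_of_not_lt h)]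
    simp [h]

lemma getD_append' {α} (L R : List α) (i : ℕ) (d : α) :
    (L ++ R).getD i d = if i < L.length then L.getD i d else R.getD (i - L.length) d := by
  split
  · next h => rw [List.getD_eq_getElem _ _ (by simp; omega), List.getD_eq_getElem _ _ h,
      List.getElem_append_left h]
  · next h =>
    by_cases h2 : i - L.length < R.length
    · rw [List.getD_eq_getElem _ _ (by simp; omega), List.getD_eq_getElem _ _ h2,
        List.getElem_append_right (by omega)]
    · rw [List.getD_eq_default _ _ (by simp; omega), List.getD_eq_default _ _ (by omega)]

lemma getD_map' (f : List ℕ → ℕ) (Q : List (List ℕ)) (i : ℕ) (d : ℕ) (h : i < Q.length) :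
    (Q.map f).getD i d = f (Q.getD i []) := by
  rw [List.getD_eq_getElem _ _ (by simpa using h), List.getD_eq_getElem _ _ h, List.getElem_map]

lemma getD_drop' {α} (P : List α) (p j : ℕ) (d : α) :
    (P.drop p).getD j d = P.getD (p + j) d := by
  by_cases h : p + j < P.length
  · rw [List.getD_eq_getElem _ _ (by simp; omega), List.getD_eq_getElem _ _ h,
      List.getElem_drop]
  · rw [List.getD_eq_default _ _ (by simp; omega), List.getD_eq_default _ _ (by omega)]

lemma length_padTake (q : ℕ) (P : List (List ℕ)) : (padTake q P).length = q := by
  simp [padTake]; omega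

lemma padTake_succ (q : ℕ) (P : List (List ℕ)) :
    padTake (q+1) P = P.headD [] :: padTake q P.tail := by
  cases P <;> simp [padTake, List.replicate_succ]

lemma padTake_getD (q : ℕ) (P : List (List ℕ)) (i : ℕ) (h : i < q) :
    (padTake q P).getD i [] = P.getD i [] := by
  rw [padTake, getD_append']
  split
  · next h2 =>
    simp only [List.length_take, lt_min_iff] at h2
    rw [List.getD_eq_getElem _ _ (by simp; omega), List.getD_eq_getElem _ _ h2.2]
    simp
  · next h2 =>
    simp only [List.length_take, lt_min_iff, not_and, not_lt] at h2
    have hPle : P.length ≤ i := h2 h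
    rw [List.getD_eq_default _ _ hPle]
    by_cases h3 : i - (P.take q).length < (List.replicate (q - P.length) ([] : List ℕ)).length
    · rw [List.getD_eq_getElem _ _ h3, List.getElem_replicate]
    · rw [List.getD_eq_default _ _ (by omega)]

def stepShape (p : ℕ) (s : List ℕ) : List ℕ :=
  (List.range (max p s.length)).map (fun i => s.getD i 0 + if i < p then 1 else 0)

def addConj (lam : List ℕ) (s : List ℕ) : List ℕ :=
  (List.range (max (lam.foldr max 0) s.length)).map
    (fun i => s.getD i 0 + lam.countP (fun p => i < p))

lemma stepShape_getD (p : ℕ) (s : List ℕ) (i : ℕ) :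
    (stepShape p s).getD i 0 = s.getD i 0 + if i < p then 1 else 0 := by
  rw [stepShape, getD_map_range]
  split
  · rfl
  · next h =>
    simp only [not_lt, max_le_iff] at h
    rw [List.getD_eq_default _ _ h.2, if_neg (by omega)]

lemma mem_le_foldr_max (lam : List ℕ) (p : ℕ) (h : p ∈ lam) : p ≤ lam.foldr max 0 := by
  induction lam with
  | nil => simp at h
  | cons q lam ih =>
    rw [List.foldr_cons]
    rcases List.mem_cons.mp h with h | h
    · subst h; exact le_max_left _ _
    · exact le_trans (ih h) (le_max_right _ _)

lemma addConj_getD (lam : List ℕ) (s : List ℕ) (i : ℕ) :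
    (addConj lam s).getD i 0 = s.getD i 0 + lam.countP (fun p => i < p) := by
  rw [addConj, getD_map_range]
  split
  · rfl
  · next h =>
    simp only [not_lt, max_le_iff] at h
    rw [List.getD_eq_default _ _ h.2, List.countP_eq_zero.mpr]
    intro p hp
    simp only [decide_eq_true_eq, not_lt]
    exact le_trans (mem_le_foldr_max lam p hp) h.1

lemma addConj_nil (s : List ℕ) : addConj [] s = s := by
  refine eqD ?_ (fun i => by rw [addConj_getD, List.countP_nil]; simp)
  simp [addConj]

lemma addConj_cons (p : ℕ) (lam : List ℕ) (s : List ℕ) :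
    addConj (p :: lam) s = addConj lam (stepShape p s) := by
  refine eqD ?_ (fun i => ?_)
  · simp only [addConj, stepShape, List.length_map, List.length_range, List.foldr_cons]
    omega
  · rw [addConj_getD, addConj_getD, stepShape_getD, List.countP_cons]
    simp only [decide_eq_true_eq]
    omega

lemma shape_step (x p : ℕ) (P : List (List ℕ)) :
    tabShape (rowsWith x (padTake p P) ++ P.drop p) = stepShape p (tabShape P) := by
  refine eqD ?_ (fun i => ?_)
  · simp only [tabShape, List.map_append, List.length_append, List.length_map,
      length_rowsWith, length_padTake, List.length_drop, stepShape, List.length_range]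
    omega
  · rw [stepShape_getD]
    rw [show tabShape (rowsWith x (padTake p P) ++ P.drop p)
        = tabShape (rowsWith x (padTake p P)) ++ tabShape (P.drop p) from by
      simp [tabShape]]
    rw [getD_append']
    split
    · next h =>
      rw [shape_rowsWith, List.length_map, length_padTake] at h
      rw [shape_rowsWith, getD_map' _ _ _ _ (by rw [length_padTake]; exact h),
        padTake_getD _ _ _ h, if_pos h, shape_getD]
    · next h =>
      rw [shape_rowsWith, List.length_map, length_padTake] at h
      push_neg at h
      rw [shape_rowsWith, List.length_map, length_padTake, shape_getD, getD_drop',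
        if_neg (by omega), shape_getD]
      congr 2
      omega

lemma block : ∀ (q : ℕ) (as rest Q : List (List ℕ)) (k off : ℕ) (ws : List ℕ),
    (∀ a ∈ as, ∀ y ∈ a, y ≤ off) → (∀ r ∈ rest, ∀ y ∈ r, y ≤ off) →
    tabShape Q = tabShape (rowsWith (off+q+1) as ++ rest) →
    ∃ Q', tabShape Q' = tabShape (rowsWith (off+1) (as ++ padTake q rest) ++ rest.drop q) ∧
      rsAux (rowsWith (off+q+1) as ++ rest) Q k
        ((List.range q).reverse.map (fun j => off+j+1) ++ ws)
      = rsAux (rowsWith (off+1) (as ++ padTake q rest) ++ rest.drop q) Q' (k+q) ws := by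
  intro q
  induction q with
  | zero =>
    intro as rest Q k off ws h1 h2 hQ
    exact ⟨Q, by simpa [padTake] using hQ, by simp [padTake]⟩
  | succ q ih =>
    intro as rest Q k off ws h1 h2 hQ
    set x := off + q + 1 with hxdef
    have hword : ((List.range (q+1)).reverse.map (fun j => off+j+1)) ++ ws
        = x :: (((List.range q).reverse.map (fun j => off+j+1)) ++ ws) := by
      rw [List.range_succ, List.reverse_append]
      simp
      rfl
    have hhead : ∀ y ∈ rest.headD [], y ≤ off := by
      cases rest with
      | nil => simp
      | cons r rs => exact fun y hy => h2 r (by simp) y hy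
    have hcas := cascade as rest x off (by omega) h1 hhead
    have hP1 : rowsWith x as ++ pushRow (x + as.length) rest
        = rowsWith (off+q+1) (as ++ [rest.headD []]) ++ rest.tail := by
      rw [rowsWith_pushRow]
    have hQlen : Q.length = as.length + rest.length := by
      have := congrArg List.length hQ
      simpa [tabShape, length_rowsWith] using this
    -- the updated recording tableau
    set Q1 := if as.length < Q.length then Q.set as.length (Q.getD as.length [] ++ [k])
      else Q ++ [[k]] with hQ1def
    have hQ1 : tabShape Q1 = tabShape (rowsWith (off+q+1) (as ++ [rest.headD []]) ++ rest.tail) := by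
      rw [← hP1]
      cases rest with
      | nil =>
        have hnot : ¬ as.length < Q.length := by simp at hQlen; omega
        rw [hQ1def, if_neg hnot]
        have hQm : tabShape Q = as.map (fun a => a.length + 1) := by
          rw [hQ]; simp [tabShape, map_len_rowsWith]
        calc tabShape (Q ++ [[k]]) = tabShape Q ++ [1] := by simp [tabShape]
          _ = as.map (fun a => a.length + 1) ++ [1] := by rw [hQm]
          _ = _ := by simp [tabShape, pushRow, map_len_rowsWith]
      | cons r0 rs =>
        have hlt : as.length < Q.length := by simp at hQlen; omega
        rw [hQ1def, if_pos hlt]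
        have hshapeQ : tabShape Q = (as.map (fun a => a.length + 1)) ++ r0.length :: rs.map List.length := by
          rw [hQ]
          simp [tabShape, map_len_rowsWith]
        have hgd : (Q.getD as.length []).length = r0.length := by
          rw [← shape_getD, hshapeQ,
            show as.length = (as.map (fun a => a.length + 1)).length from (List.length_map _).symm,
            getD_append_mid]
        rw [show tabShape (Q.set as.length (Q.getD as.length [] ++ [k]))
            = (tabShape Q).set as.length ((Q.getD as.length []).length + 1) from by
          simp [tabShape, List.map_set]]
        rw [hgd, hshapeQ,
          show as.length = (as.map (fun a => a.length + 1)).length from (List.length_map _).symm,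
          set_append_mid]
        simp [tabShape, pushRow, map_len_rowsWith]
    have hcore' : ∀ a ∈ as ++ [rest.headD []], ∀ y ∈ a, y ≤ off := by
      intro a ha
      rcases List.mem_append.mp ha with ha | ha
      · exact h1 a ha
      · rw [List.mem_singleton] at ha; subst ha; exact hhead
    have hrest' : ∀ r ∈ rest.tail, ∀ y ∈ r, y ≤ off := by
      intro r hr
      cases rest with
      | nil => simp at hr
      | cons r0 rs => exact h2 r (List.mem_cons_of_mem _ hr)
    obtain ⟨Q', hQ'shape, heq⟩ := ih (as ++ [rest.headD []]) rest.tail Q1 (k+1) off ws hcore' hrest' hQ1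
    have hfinal1 : (as ++ [rest.headD []]) ++ padTake q rest.tail = as ++ padTake (q+1) rest := by
      rw [padTake_succ, List.append_assoc]
      rfl
    have hfinal2 : rest.tail.drop q = rest.drop (q+1) := by
      cases rest <;> simp
    refine ⟨Q', ?_, ?_⟩
    · rw [← hfinal1, ← hfinal2]; exact hQ'shape
    · rw [hword]
      show rsAux _ Q k (x :: _) = _
      rw [rsAux]
      have hcas' : rsInsertTab (rowsWith (off+(q+1)+1) as ++ rest) x
          = (rowsWith x as ++ pushRow (x + as.length) rest, as.length) := hcas
      simp only [hcas']
      rw [← hQ1def, hP1, heq, hfinal1, hfinal2]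
      congr 1
      omega

lemma rowsWith_bound : ∀ (as : List (List ℕ)) (x off : ℕ),
    (∀ a ∈ as, ∀ y ∈ a, y ≤ off) → off < x →
    ∀ r ∈ rowsWith x as, ∀ y ∈ r, y ≤ x + as.length - 1 := by
  intro as
  induction as with
  | nil => intro x off _ _ r hr; simp [rowsWith] at hr
  | cons a as ih =>
    intro x off h hx r hr y hy
    rcases List.mem_cons.mp hr with hr | hr
    · subst hr
      simp only [List.length_cons]
      rcases List.mem_append.mp hy with hy | hy
      · have := h a (by simp) y hy; omega
      · rw [List.mem_singleton] at hy; omega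
    · have := ih (x+1) off (fun b hb => h b (List.mem_cons_of_mem _ hb)) (by omega) r hr y hy
      simp only [List.length_cons]
      omega

lemma main_lemma : ∀ (lam : List ℕ) (off : ℕ) (P Q : List (List ℕ)) (k : ℕ),
    (∀ r ∈ P, ∀ y ∈ r, y ≤ off) → tabShape Q = tabShape P →
    (∀ r ∈ (rsAux P Q k (youngLongestWord off lam)).1, ∀ y ∈ r, y ≤ off + lam.sum) ∧
    tabShape (rsAux P Q k (youngLongestWord off lam)).1 = addConj lam (tabShape P) ∧
    tabShape (rsAux P Q k (youngLongestWord off lam)).2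
      = tabShape (rsAux P Q k (youngLongestWord off lam)).1 := by
  intro lam
  induction lam with
  | nil =>
    intro off P Q k hP hQ
    refine ⟨by simpa [youngLongestWord, rsAux] using hP, ?_, ?_⟩
    · simp [youngLongestWord, rsAux, addConj_nil]
    · simpa [youngLongestWord, rsAux] using hQ
  | cons p rest ih =>
    intro off P Q k hP hQ
    obtain ⟨Q', hQ'shape, heq⟩ := block p [] P Q k off (youngLongestWord (off + p) rest)
      (by simp) hP (by simpa [rowsWith] using hQ)
    rw [show youngLongestWord off (p :: rest)
        = ((List.range p).reverse.map (fun j => off + j + 1)) ++ youngLongestWord (off + p) rest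
        from rfl]
    rw [show rsAux P Q k (((List.range p).reverse.map (fun j => off + j + 1))
          ++ youngLongestWord (off + p) rest)
        = rsAux (rowsWith (off+1) ([] ++ padTake p P) ++ P.drop p) Q' (k+p)
          (youngLongestWord (off + p) rest) from heq]
    simp only [List.nil_append] at hQ'shape ⊢
    set P1 := rowsWith (off+1) (padTake p P) ++ P.drop p with hP1def
    have hP1bound : ∀ r ∈ P1, ∀ y ∈ r, y ≤ off + p := by
      intro r hr y hy
      rcases List.mem_append.mp hr with hr | hr
      · have hpad : ∀ a ∈ padTake p P, ∀ y ∈ a, y ≤ off := by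
          intro a ha z hz
          rcases List.mem_append.mp ha with ha | ha
          · exact hP a (List.mem_of_mem_take ha) z hz
          · rw [List.eq_of_mem_replicate ha] at hz; simp at hz
        have := rowsWith_bound (padTake p P) (off+1) off hpad (by omega) r hr y hy
        rw [length_padTake] at this
        omega
      · have := hP r (List.mem_of_mem_drop hr) y hy
        omega
    obtain ⟨hb, hs1, hs2⟩ := ih (off + p) P1 Q' (k + p) hP1bound hQ'shape
    refine ⟨?_, ?_, ?_⟩
    · intro r hr y hy
      have := hb r hr y hy
      simp only [List.sum_cons]
      omega
    · rw [hs1, hP1def, shape_step, addConj_cons]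
    · exact hs2

/-- In `Sₙ`, the Robinson–Schensted correspondence associates to the longest element of the
Young subgroup of type `lam` a pair of standard Young tableaux whose common shape is the
conjugate partition `lam'`. -/
theorem rs_shape_of_young_longest_element (n : ℕ) (lam : List ℕ)
    (hpos : ∀ p ∈ lam, 0 < p) (hsum : lam.sum = n) :
    tabShape (rsPair (youngLongestWord 0 lam)).1 = conjPartition lam ∧
    tabShape (rsPair (youngLongestWord 0 lam)).2 = conjPartition lam := by
  obtain ⟨_, hs1, hs2⟩ := main_lemma lam 0 [] [] 1 (by simp) rfl
  have hconj : addConj lam (tabShape []) = conjPartition lam := by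
    simp [addConj, conjPartition, tabShape]
  rw [rsPair]
  exact ⟨by rw [hs1, hconj], by rw [hs2, hs1, hconj]⟩
end

section
/- The Möbius function of the Bruhat order on a Coxeter group $W$ is given by $\mu(y, x) = (-1)^{l(x) - l(y)}$ for all $y \leq x$ in Bruhat order. -/
open Finset
open scoped Classical

variable {B W : Type*} [Group W] {M : CoxeterMatrix B}

/-- The Bruhat order on a Coxeter group: `y ≤ x` iff some (equivalently, any) reduced word
for `x` contains a subword which is a word for `y`. -/
def BruhatLE (cs : CoxeterSystem M W) (y x : W) : Prop :=
  ∃ ω : List B, cs.IsReduced ω ∧ cs.wordProd ω = x ∧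
    ∃ ω' : List B, ω'.Sublist ω ∧ cs.wordProd ω' = y

section Aux

open List

namespace CoxAux

variable (cs : CoxeterSystem M W)

local prefix:100 "s" => cs.simple
local prefix:100 "π" => cs.wordProd
local prefix:100 "ℓ" => cs.length

/-- One step of the permutation representation used to prove strong exchange. -/
noncomputable def sig (i : B) : Equiv.Perm (W × ZMod 2) :=
  Function.Involutive.toPerm
    (fun p => (s i * p.1 * s i, p.2 + if p.1 = s i then 1 else 0))
    (by
      intro p
      ext
      · simp [mul_assoc]
      · simp only
        have hcond : (s i * p.1 * s i = s i) ↔ (p.1 = s i) := by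
          constructor
          · intro h
            have := congrArg (fun x => s i * x * s i) h
            simpa [mul_assoc] using this
          · intro h; rw [h]; simp
        rw [if_congr hcond rfl rfl]
        have h11 : (1 + 1 : ZMod 2) = 0 := by decide
        rcases em (p.1 = s i) with h | h <;>
          simp [h, add_assoc, h11])

lemma sig_apply (i : B) (t : W) (ε : ZMod 2) :
    sig cs i (t, ε) = (s i * t * s i, ε + if t = s i then 1 else 0) := rfl

lemma sig_mul_pow_apply (i j : B) (k : ℕ) (t : W) (ε : ZMod 2) :
    ((sig cs i * sig cs j) ^ k) (t, ε) =
      ((s i * s j) ^ k * t * ((s i * s j) ^ k)⁻¹,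
        ε + ∑ l ∈ Finset.range k,
          ((if (s i * s j) ^ l * t * ((s i * s j) ^ l)⁻¹ = s j then 1 else 0)
            + (if (s i * s j) ^ l * t * ((s i * s j) ^ l)⁻¹ = s j * s i * s j
                then (1 : ZMod 2) else 0))) := by
  induction k generalizing t ε with
  | zero => simp
  | succ k ih =>
    rw [pow_succ, Equiv.Perm.mul_apply]
    have hstep : ((sig cs i * sig cs j)) (t, ε) =
        ((s i * s j) * t * ((s i * s j))⁻¹,
          ε + ((if t = s j then 1 else 0)
            + (if t = s j * s i * s j then (1 : ZMod 2) else 0))) := by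
      rw [Equiv.Perm.mul_apply, sig_apply, sig_apply]
      have hc : (s j * t * s j = s i) ↔ (t = s j * s i * s j) := by
        constructor
        · intro h
          have := congrArg (fun x => s j * x * s j) h
          simpa [mul_assoc] using this
        · intro h; rw [h]; simp [mul_assoc]
      rw [if_congr hc rfl rfl]
      ext
      · simp [mul_assoc]
      · simp [add_assoc]
    rw [hstep, ih]
    have key : ∀ l : ℕ, (s i * s j) ^ l * ((s i * s j) * t * (s i * s j)⁻¹) *
        ((s i * s j) ^ l)⁻¹ = (s i * s j) ^ (l + 1) * t * ((s i * s j) ^ (l + 1))⁻¹ := by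
      intro l
      simp only [pow_succ, mul_inv_rev, mul_assoc]
    ext
    · simp only
      rw [key k]
    · simp only
      rw [Finset.sum_range_succ']
      simp only [key, pow_zero, one_mul, inv_one, mul_one]
      ring

lemma sum_range_two_mul (f : ℕ → ZMod 2) (n : ℕ) :
    ∑ r ∈ Finset.range (2 * n), f r
      = ∑ l ∈ Finset.range n, (f (2 * l) + f (2 * l + 1)) := by
  induction n with
  | zero => simp
  | succ n ih =>
    rw [Nat.mul_succ, show 2 * n + 2 = (2 * n + 1) + 1 from rfl,
      Finset.sum_range_succ, Finset.sum_range_succ, ih, Finset.sum_range_succ]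
    ring

lemma sig_liftable : M.IsLiftable (sig cs) := by
  intro i j
  apply Equiv.ext
  rintro ⟨t, ε⟩
  have hp : (s i * s j) ^ M i j = 1 := cs.simple_mul_simple_pow i j
  have base2 : s j * (s i * s j) = (s i * s j)⁻¹ * s j := by
    rw [mul_inv_rev, cs.inv_simple, cs.inv_simple, ← mul_assoc]
  have hl : ∀ l : ℕ, s j * (s i * s j) ^ l = ((s i * s j) ^ l)⁻¹ * s j := by
    intro l
    induction l with
    | zero => simp
    | succ l ih =>
      calc s j * (s i * s j) ^ (l + 1)
          = (s j * (s i * s j)) * (s i * s j) ^ l := by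
            rw [pow_succ', ← mul_assoc]
        _ = (s i * s j)⁻¹ * (s j * (s i * s j) ^ l) := by rw [base2, mul_assoc]
        _ = (s i * s j)⁻¹ * (((s i * s j) ^ l)⁻¹ * s j) := by rw [ih]
        _ = ((s i * s j) ^ (l + 1))⁻¹ * s j := by
            conv_rhs => rw [pow_succ, mul_inv_rev, mul_assoc]
  have hconj : ∀ l : ℕ, ((s i * s j) ^ l)⁻¹ * s j * (s i * s j) ^ l
      = s j * (s i * s j) ^ (2 * l) := by
    intro l
    rw [← hl l, mul_assoc, ← pow_add, two_mul]
  have hconj2 : ∀ l : ℕ, ((s i * s j) ^ l)⁻¹ * (s j * s i * s j) * (s i * s j) ^ l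
      = s j * (s i * s j) ^ (2 * l + 1) := by
    intro l
    have h1 : s j * s i * s j = s j * (s i * s j) := by rw [mul_assoc]
    calc ((s i * s j) ^ l)⁻¹ * (s j * s i * s j) * (s i * s j) ^ l
        = (((s i * s j) ^ l)⁻¹ * s j) * ((s i * s j) * (s i * s j) ^ l) := by
          simp only [mul_assoc]
      _ = (s j * (s i * s j) ^ l) * ((s i * s j) * (s i * s j) ^ l) := by rw [← hl l]
      _ = s j * (s i * s j) ^ (2 * l + 1) := by
          rw [mul_assoc, ← pow_succ', ← pow_add]
          congr 2
          omega
  have conj_iff : ∀ (x c u : W), (x * u * x⁻¹ = c) ↔ (u = x⁻¹ * c * x) := by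
    intro x c u
    constructor
    · intro h; rw [← h]; group
    · intro h; rw [h]; group
  have hcond1 : ∀ l : ℕ, ((s i * s j) ^ l * t * ((s i * s j) ^ l)⁻¹ = s j)
      ↔ (t = s j * (s i * s j) ^ (2 * l)) := by
    intro l
    rw [conj_iff, hconj]
  have hcond2 : ∀ l : ℕ, ((s i * s j) ^ l * t * ((s i * s j) ^ l)⁻¹ = s j * s i * s j)
      ↔ (t = s j * (s i * s j) ^ (2 * l + 1)) := by
    intro l
    rw [conj_iff, hconj2]
  have hsum : ∑ l ∈ Finset.range (M i j),
      ((if (s i * s j) ^ l * t * ((s i * s j) ^ l)⁻¹ = s j then 1 else 0)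
        + (if (s i * s j) ^ l * t * ((s i * s j) ^ l)⁻¹ = s j * s i * s j
            then (1 : ZMod 2) else 0)) = 0 := by
    have hc : ∀ l : ℕ, ((if (s i * s j) ^ l * t * ((s i * s j) ^ l)⁻¹ = s j then 1 else 0)
        + (if (s i * s j) ^ l * t * ((s i * s j) ^ l)⁻¹ = s j * s i * s j
            then (1 : ZMod 2) else 0))
        = ((if t = s j * (s i * s j) ^ (2 * l) then 1 else 0)
          + (if t = s j * (s i * s j) ^ (2 * l + 1) then (1 : ZMod 2) else 0)) := by
      intro l
      rw [if_congr (hcond1 l) rfl rfl, if_congr (hcond2 l) rfl rfl]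
    rw [Finset.sum_congr rfl (fun l _ => hc l), ← sum_range_two_mul
      (fun r => if t = s j * (s i * s j) ^ r then (1 : ZMod 2) else 0) (M i j),
      two_mul, Finset.sum_range_add]
    have heq : ∀ r : ℕ, (if t = s j * (s i * s j) ^ (M i j + r) then (1 : ZMod 2) else 0)
        = (if t = s j * (s i * s j) ^ r then (1 : ZMod 2) else 0) := by
      intro r
      rw [pow_add, hp, one_mul]
    rw [Finset.sum_congr rfl (fun r _ => heq r), ← Finset.sum_add_distrib]
    have hzero : ∀ r : ℕ, (if t = s j * (s i * s j) ^ r then (1 : ZMod 2) else 0)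
        + (if t = s j * (s i * s j) ^ r then (1 : ZMod 2) else 0) = 0 := by
      intro r
      rcases em (t = s j * (s i * s j) ^ r) with h | h <;> simp [h]
      decide
    rw [Finset.sum_congr rfl (fun r _ => hzero r), Finset.sum_const, smul_zero]
  rw [sig_mul_pow_apply, hp, hsum]
  simp

/-- The permutation representation of the Coxeter group. -/
noncomputable def phi : W →* Equiv.Perm (W × ZMod 2) :=
  cs.lift ⟨sig cs, sig_liftable cs⟩

lemma phi_simple (i : B) : phi cs (s i) = sig cs i :=
  cs.lift_apply_simple (sig_liftable cs) i

lemma phi_wordProd (ω : List B) (t : W) (ε : ZMod 2) :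
    phi cs (π ω) (t, ε)
      = (π ω * t * (π ω)⁻¹, ε + ((cs.rightInvSeq ω).count t : ZMod 2)) := by
  induction ω generalizing ε with
  | nil => simp [CoxeterSystem.rightInvSeq]
  | cons i ω ih =>
    rw [cs.wordProd_cons, map_mul, Equiv.Perm.mul_apply, ih, phi_simple, sig_apply]
    have hris : cs.rightInvSeq (i :: ω) = ((π ω)⁻¹ * s i * π ω) :: cs.rightInvSeq ω := rfl
    have hcount : ((cs.rightInvSeq (i :: ω)).count t : ZMod 2)
        = (cs.rightInvSeq ω).count t + if t = (π ω)⁻¹ * s i * π ω then 1 else 0 := by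
      rw [hris, List.count_cons]
      push_cast
      congr 1
      by_cases h : t = (π ω)⁻¹ * s i * π ω
      · simp [h]
      · simp [h, Ne.symm h]
    have hcond : (π ω * t * (π ω)⁻¹ = s i) ↔ (t = (π ω)⁻¹ * s i * π ω) := by
      constructor
      · intro h; rw [← h]; group
      · intro h; rw [h]; group
    ext
    · simp only
      rw [mul_inv_rev, cs.inv_simple]
      simp only [mul_assoc]
    · simp only
      rw [hcount, if_congr hcond rfl rfl, add_assoc]

/-- The reflection cocycle. -/
noncomputable def psi (w t : W) : ZMod 2 := (phi cs w (t, 0)).2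

lemma psi_wordProd (ω : List B) (t : W) :
    psi cs (π ω) t = ((cs.rightInvSeq ω).count t : ZMod 2) := by
  rw [psi, phi_wordProd]
  simp

lemma phi_apply' (w t : W) (ε : ZMod 2) :
    phi cs w (t, ε) = (w * t * w⁻¹, ε + psi cs w t) := by
  obtain ⟨ω, rfl⟩ := cs.wordProd_surjective w
  rw [phi_wordProd, psi_wordProd]

lemma psi_mul (a b t : W) :
    psi cs (a * b) t = psi cs b t + psi cs a (b * t * b⁻¹) := by
  have : phi cs (a * b) (t, 0) = phi cs a (phi cs b (t, 0)) := by
    rw [map_mul, Equiv.Perm.mul_apply]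
  rw [psi, this, phi_apply' cs b, phi_apply' cs a]
  simp [add_assoc]

lemma psi_one (t : W) : psi cs 1 t = 0 := by
  rw [psi, map_one]
  rfl

lemma psi_simple (i : B) (t : W) :
    psi cs (s i) t = if t = s i then 1 else 0 := by
  have : s i = π [i] := by simp
  rw [this, psi_wordProd]
  have : cs.rightInvSeq [i] = [s i] := by
    simp [CoxeterSystem.rightInvSeq]
  rw [this]
  by_cases h : t = s i
  · simp [h]
  · simp [h, Ne.symm h]

lemma psi_refl_self {t : W} (ht : cs.IsReflection t) : psi cs t t = 1 := by
  obtain ⟨w, i, rfl⟩ := ht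
  set t := w * s i * w⁻¹ with hT
  have h0 : psi cs (w * w⁻¹) t = 0 := by rw [mul_inv_cancel, psi_one]
  have h1 : psi cs (w⁻¹) t + psi cs w (w⁻¹ * t * w⁻¹⁻¹) = 0 := by
    rw [← psi_mul, h0]
  have hconj : w⁻¹ * t * w⁻¹⁻¹ = s i := by rw [hT]; group
  rw [hconj] at h1
  have h2 : psi cs t t = psi cs (s i * w⁻¹) t + psi cs w ((s i * w⁻¹) * t * (s i * w⁻¹)⁻¹) := by
    have : t = w * (s i * w⁻¹) := by rw [hT]; group
    nth_rewrite 1 [this]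
    rw [psi_mul]
  have hconj2 : (s i * w⁻¹) * t * (s i * w⁻¹)⁻¹ = s i := by
    rw [hT, mul_inv_rev, inv_inv, cs.inv_simple]
    calc s i * w⁻¹ * (w * s i * w⁻¹) * (w * s i)
        = s i * (w⁻¹ * w) * s i * (w⁻¹ * w) * s i := by simp only [mul_assoc]
      _ = s i := by simp
  have h3 : psi cs (s i * w⁻¹) t = psi cs (w⁻¹) t + psi cs (s i) (w⁻¹ * t * w⁻¹⁻¹) := by
    rw [← psi_mul]
  rw [hconj2, h3, hconj, psi_simple] at h2
  rw [if_pos rfl] at h2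
  have h4 : psi cs w⁻¹ t + psi cs w (s i) = 0 := h1
  rw [h2]
  have hre : (psi cs w⁻¹ t + 1) + psi cs w (s i)
      = (psi cs w⁻¹ t + psi cs w (s i)) + 1 := by ring
  rw [hre, h4, zero_add]

lemma descent_of_psi_eq_one {w t : W} (h : psi cs w t = 1) : ℓ (w * t) < ℓ w := by
  obtain ⟨ω, hω, rfl⟩ := cs.exists_reduced_word' w
  rw [psi_wordProd] at h
  have hmem : t ∈ cs.rightInvSeq ω := by
    by_contra hmem
    rw [List.count_eq_zero.mpr hmem] at h
    exact one_ne_zero h.symm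
  exact (cs.isRightInversion_of_mem_rightInvSeq hω hmem).2

lemma psi_eq_one_of_descent {w t : W} (ht : cs.IsReflection t) (h : ℓ (w * t) < ℓ w) :
    psi cs w t = 1 := by
  rcases (show ∀ x : ZMod 2, x = 0 ∨ x = 1 by decide) (psi cs w t) with h0 | h1
  · exfalso
    have httt : t * t * t⁻¹ = t := by rw [ht.mul_self, one_mul, ht.inv]
    have hmul : psi cs (w * t) t = psi cs t t + psi cs w t := by
      rw [psi_mul, httt, psi_refl_self cs ht]
    rw [h0, add_zero, psi_refl_self cs ht] at hmul
    have := descent_of_psi_eq_one cs hmul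
    rw [mul_assoc, ht.mul_self, mul_one] at this
    omega
  · exact h1

/-- **Strong exchange property**. -/
theorem strong_exchange {ω : List B} (hω : cs.IsReduced ω) {t : W}
    (ht : cs.IsReflection t) (h : ℓ (π ω * t) < ℓ (π ω)) :
    ∃ j < ω.length, π (ω.eraseIdx j) = π ω * t := by
  have h1 : psi cs (π ω) t = 1 := psi_eq_one_of_descent cs ht h
  rw [psi_wordProd] at h1
  have hmem : t ∈ cs.rightInvSeq ω := by
    by_contra hmem
    rw [List.count_eq_zero.mpr hmem] at h1
    exact one_ne_zero h1.symm
  obtain ⟨j, hj, hget⟩ := List.getElem_of_mem hmem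
  rw [cs.length_rightInvSeq] at hj
  refine ⟨j, hj, ?_⟩
  have hgetD : (cs.rightInvSeq ω).getD j 1 = t := by
    rw [List.getD_eq_getElem _ _ (by rw [cs.length_rightInvSeq]; exact hj), hget]
  rw [← hgetD]
  exact (cs.wordProd_mul_getD_rightInvSeq ω j).symm

/-- **Deletion property**: every word contains a reduced sublist with the same product. -/
theorem deletion (κ : List B) :
    ∃ κ', κ'.Sublist κ ∧ cs.IsReduced κ' ∧ π κ' = π κ := by
  generalize hn : κ.length = n
  induction n using Nat.strong_induction_on generalizing κ with
  | _ n ih =>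
  by_cases hred : cs.IsReduced κ
  · exact ⟨κ, List.Sublist.refl κ, hred, rfl⟩
  · have hκne : κ ≠ [] := by
      rintro rfl
      exact hred (by simp [CoxeterSystem.IsReduced])
    obtain ⟨ξ, d, rfl⟩ := List.eq_nil_or_concat κ |>.resolve_left hκne
    rw [List.concat_eq_append] at *
    by_cases hξ : cs.IsReduced ξ
    · -- ξ reduced but ξ ++ [d] not: d is a right descent of π ξ
      have hlen : ℓ (π (ξ ++ [d])) < ℓ (π ξ) := by
        rw [cs.wordProd_append, cs.wordProd_singleton]
        rcases cs.length_mul_simple (π ξ) d with hup | hdown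
        · exfalso
          apply hred
          rw [CoxeterSystem.IsReduced, cs.wordProd_append, cs.wordProd_singleton, hup,
            List.length_append, List.length_singleton, hξ]
        · omega
      rw [cs.wordProd_append, cs.wordProd_singleton] at hlen
      obtain ⟨j, hj, hjp⟩ := strong_exchange cs hξ (cs.isReflection_simple d) hlen
      obtain ⟨κ₃, hsub, hκ₃red, hκ₃prod⟩ := ih (ξ.eraseIdx j).length
        (by
          have := List.length_eraseIdx_add_one hj
          subst hn
          simp only [List.length_append, List.length_singleton]
          omega)
        (ξ.eraseIdx j) rfl
      refine ⟨κ₃, ?_, hκ₃red, ?_⟩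
      · exact hsub.trans ((List.eraseIdx_sublist ξ j).trans (List.sublist_append_left ξ [d]))
      · rw [hκ₃prod, hjp, cs.wordProd_append, cs.wordProd_singleton]
    · obtain ⟨ξ', hsub', hξ'red, hξ'prod⟩ := ih ξ.length
        (by subst hn; simp only [List.length_append, List.length_singleton]; omega) ξ rfl
      have hltlen : ξ'.length < ξ.length := by
        rcases List.Sublist.length_le hsub' |>.lt_or_eq with h | h
        · exact h
        · exfalso
          exact hξ (by rwa [hsub'.eq_of_length h] at hξ'red)
      obtain ⟨κ₃, hsub, hκ₃red, hκ₃prod⟩ := ih (ξ' ++ [d]).length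
        (by subst hn; simp only [List.length_append, List.length_singleton]; omega)
        (ξ' ++ [d]) rfl
      refine ⟨κ₃, hsub.trans (List.Sublist.append hsub' (List.Sublist.refl [d])), hκ₃red, ?_⟩
      rw [hκ₃prod, cs.wordProd_append, cs.wordProd_append, hξ'prod]

/-- The Bruhat order via chains of reflections increasing length. -/
inductive Chain (cs : CoxeterSystem M W) : W → W → Prop
  | refl (w : W) : Chain cs w w
  | step {u v t : W} : Chain cs u v → cs.IsReflection t →
      cs.length v < cs.length (v * t) → Chain cs u (v * t)

lemma Chain.length_le {cs : CoxeterSystem M W} {u v : W} (h : Chain cs u v) :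
    cs.length u ≤ cs.length v := by
  induction h with
  | refl => exact le_refl _
  | step h ht hl ih => omega

lemma Chain.trans {cs : CoxeterSystem M W} {u v w : W}
    (h1 : Chain cs u v) (h2 : Chain cs v w) : Chain cs u w := by
  induction h2 with
  | refl => exact h1
  | step h ht hl ih => exact Chain.step ih ht hl

lemma Chain.eq_of_length_ge {cs : CoxeterSystem M W} {u v : W} (h : Chain cs u v)
    (hl : cs.length v ≤ cs.length u) : u = v := by
  cases h with
  | refl => rfl
  | step h ht hlt =>
    have := h.length_le
    omega

lemma chain_single {u t : W} (ht : cs.IsReflection t)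
    (hl : ℓ u < ℓ (u * t)) : Chain cs u (u * t) :=
  Chain.step (Chain.refl u) ht hl

lemma chain_ascent {w : W} {i : B} (hl : ℓ w < ℓ (w * s i)) :
    Chain cs w (w * s i) :=
  chain_single cs (cs.isReflection_simple i) hl

lemma chain_descent {w : W} {i : B} (hl : ℓ (w * s i) < ℓ w) :
    Chain cs (w * s i) w := by
  have h2 : ℓ (w * s i) < ℓ (w * s i * s i) := by
    rwa [mul_assoc, cs.simple_mul_simple_self, mul_one]
  have := chain_single cs (cs.isReflection_simple i) h2
  rwa [mul_assoc, cs.simple_mul_simple_self, mul_one] at this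

/-- Chain order implies the subword property for every reduced word. -/
theorem chain_subword {y x : W} (h : Chain cs y x) :
    ∀ τ : List B, cs.IsReduced τ → π τ = x →
      ∃ τ', τ'.Sublist τ ∧ cs.IsReduced τ' ∧ π τ' = y := by
  induction h with
  | refl => exact fun τ hτ hπ => ⟨τ, List.Sublist.refl τ, hτ, hπ⟩
  | @step v t h ht hl ih =>
    intro τ hτ hπ
    have hdesc : ℓ (π τ * t) < ℓ (π τ) := by
      rw [hπ, mul_assoc, ht.mul_self, mul_one]
      exact hl
    obtain ⟨j, hj, hjp⟩ := strong_exchange cs hτ ht hdesc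
    have hjv : π (τ.eraseIdx j) = v := by
      rw [hjp, hπ, mul_assoc, ht.mul_self, mul_one]
    obtain ⟨κ, hκsub, hκred, hκprod⟩ := deletion cs (τ.eraseIdx j)
    obtain ⟨τ', hsub', hred', hprod'⟩ := ih κ hκred (by rw [hκprod, hjv])
    exact ⟨τ', hsub'.trans (hκsub.trans (List.eraseIdx_sublist τ j)), hred', hprod'⟩

lemma ascent_len {w : W} {i : B} (h : ℓ w < ℓ (w * s i)) : ℓ (w * s i) = ℓ w + 1 := by
  rcases cs.length_mul_simple w i with h1 | h1 <;> omega

lemma descent_len {w : W} {i : B} (h : ℓ (w * s i) < ℓ w) : ℓ (w * s i) + 1 = ℓ w := by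
  rcases cs.length_mul_simple w i with h1 | h1 <;> omega

lemma asc_or_desc (w : W) (i : B) : ℓ w < ℓ (w * s i) ∨ ℓ (w * s i) < ℓ w := by
  rcases cs.length_mul_simple w i with h1 | h1 <;> omega

lemma sd_conj_refl (t : W) (ht : cs.IsReflection t) (d : B) :
    cs.IsReflection (s d * t * s d) := by
  have := ht.conj (s d)
  rwa [cs.inv_simple] at this

/-- Subword property implies chain: main induction. -/
theorem subword_chain : ∀ (n : ℕ) (x y : W), ℓ x = n →
    (∃ ω, cs.IsReduced ω ∧ π ω = x ∧ ∃ ω', ω'.Sublist ω ∧ π ω' = y) →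
    Chain cs y x := by
  intro n
  induction n using Nat.strong_induction_on with
  | _ n ih =>
  intro x y hn ⟨ω, hred, hπ, ω', hsub0, hπ'⟩
  -- make the sublist reduced
  obtain ⟨ω'', hsub1, hred'', hπ''⟩ := deletion cs ω'
  have hsub : ω''.Sublist ω := hsub1.trans hsub0
  have hπy : π ω'' = y := by rw [hπ'', hπ']
  -- inner lemma M0
  have M0 : ∀ (u v : W), Chain cs u v → ∀ (d : B), ℓ v < n → ℓ u < ℓ (u * s d) →
      Chain cs (u * s d) v ∨ Chain cs (u * s d) (v * s d) := by
    intro u v hch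
    induction hch with
    | refl => exact fun d _ _ => Or.inr (Chain.refl _)
    | @step v t h ht hl ih2 =>
      intro d hvn hasc
      have hvlt : ℓ v < n := by omega
      rcases ih2 d hvlt hasc with h1 | h1
      · exact Or.inl (h1.trans (chain_single cs ht hl))
      · by_cases hvd : ℓ (v * s d) < ℓ v
        · -- descent at v : go back from v * s d to v
          have hchv : Chain cs (u * s d) v := h1.trans (chain_descent cs hvd)
          exact Or.inl (hchv.trans (chain_single cs ht hl))
        · have hvasc : ℓ v < ℓ (v * s d) := by
            rcases asc_or_desc cs v d with h2 | h2 <;> omega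
          by_cases hvtd : ℓ (v * t) < ℓ (v * t * s d)
          · -- ascent at v * t
            refine Or.inr (h1.trans ?_)
            have heq : (v * s d) * (s d * t * s d) = v * t * s d := by
              calc (v * s d) * (s d * t * s d) = v * (s d * s d) * t * s d := by
                    simp only [mul_assoc]
                _ = v * t * s d := by rw [cs.simple_mul_simple_self]; simp
            have hlen : ℓ (v * s d) < ℓ ((v * s d) * (s d * t * s d)) := by
              rw [heq, ascent_len cs hvasc, ascent_len cs hvtd]
              omega
            have := chain_single cs (sd_conj_refl cs t ht d) hlen
            rwa [heq] at this
          · have hvtdesc : ℓ (v * t * s d) < ℓ (v * t) := by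
              rcases asc_or_desc cs (v * t) d with h2 | h2 <;> omega
            by_cases h2 : ℓ (v * s d) < ℓ (v * t * s d)
            · -- step from v * s d to v * t * s d, then ascend to v * t
              refine Or.inl (h1.trans ?_)
              have heq : (v * s d) * (s d * t * s d) = v * t * s d := by
                calc (v * s d) * (s d * t * s d) = v * (s d * s d) * t * s d := by
                      simp only [mul_assoc]
                  _ = v * t * s d := by rw [cs.simple_mul_simple_self]; simp
              have hstep : Chain cs (v * s d) (v * t * s d) := by
                have := chain_single cs (sd_conj_refl cs t ht d) (by rwa [heq])
                rwa [heq] at this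
              exact hstep.trans (chain_descent cs hvtdesc)
            · -- hard subcase : use strong induction hypothesis ih
              refine Or.inl ?_
              obtain ⟨ρ₀, hρ₀red, hρ₀prod⟩ := cs.exists_reduced_word' (v * t * s d)
              have hρprod : π (ρ₀ ++ [d]) = v * t := by
                rw [cs.wordProd_append, cs.wordProd_singleton, ← hρ₀prod, mul_assoc,
                  cs.simple_mul_simple_self, mul_one]
              have hρred : cs.IsReduced (ρ₀ ++ [d]) := by
                rw [CoxeterSystem.IsReduced, hρprod, List.length_append,
                  List.length_singleton]
                rw [CoxeterSystem.IsReduced] at hρ₀red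
                rw [← hρ₀red, ← hρ₀prod]
                have hdl := descent_len cs hvtdesc
                omega
              have huvt : Chain cs u (v * t) := h.trans (chain_single cs ht hl)
              obtain ⟨ζ, hζsub, hζred, hζprod⟩ := chain_subword cs huvt (ρ₀ ++ [d])
                hρred hρprod
              obtain ⟨a, b, hζeq, hasubρ, hbsub⟩ := List.sublist_append_iff.mp hζsub
              rcases List.sublist_singleton.mp hbsub with hb | hb
              · -- ζ entirely inside ρ₀ : then ζ ++ [d] is a reduced word for u * s d
                subst hb
                rw [List.append_nil] at hζeq
                subst hζeq
                apply ih (ℓ (v * t)) (by omega) (v * t) (u * s d) rfl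
                refine ⟨ρ₀ ++ [d], hρred, hρprod, ζ ++ [d], ?_, ?_⟩
                · exact List.Sublist.append hasubρ (List.Sublist.refl [d])
                · rw [cs.wordProd_append, cs.wordProd_singleton, hζprod]
              · -- impossible : would make u * s d too short
                exfalso
                subst hb
                have hlenζ : ζ.length = ℓ u := by
                  rw [CoxeterSystem.IsReduced] at hζred
                  rw [← hζred, hζprod]
                have hπa : π a * s d = u := by
                  rw [← cs.wordProd_singleton, ← cs.wordProd_append, ← hζeq, hζprod]
                have husd : u * s d = π a := by
                  rw [← hπa, mul_assoc, cs.simple_mul_simple_self, mul_one]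
                have h3 : ℓ (u * s d) ≤ a.length := by
                  rw [husd]; exact cs.length_wordProd_le a
                have h4 : a.length + 1 = ζ.length := by
                  rw [hζeq, List.length_append, List.length_singleton]
                omega
  -- main argument
  rcases List.eq_nil_or_concat ω with hω | ⟨ξ, d, hωeq⟩
  · subst hω
    have : ω'' = [] := List.sublist_nil.mp hsub
    subst this
    have hx1 : x = 1 := by rw [← hπ]; simp
    have hy1 : y = 1 := by rw [← hπy]; simp
    rw [hx1, hy1]
    exact Chain.refl 1
  · rw [List.concat_eq_append] at hωeq
    subst hωeq
    have hξred : cs.IsReduced ξ := by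
      have := CoxeterSystem.IsReduced.take hred ξ.length
      rwa [List.take_left] at this
    have hξlen : ℓ (π ξ) = ξ.length := hξred
    have hxval : x = π ξ * s d := by
      rw [← hπ, cs.wordProd_append, cs.wordProd_singleton]
    have hxlen : ℓ x = ξ.length + 1 := by
      rw [← hπ]
      rw [CoxeterSystem.IsReduced] at hred
      rw [hred, List.length_append, List.length_singleton]
    have hξasc : ℓ (π ξ) < ℓ (π ξ * s d) := by
      rw [← hxval]
      omega
    obtain ⟨a, b, hζeq, hasubξ, hbsub⟩ := List.sublist_append_iff.mp hsub
    rcases List.sublist_singleton.mp hbsub with hb | hb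
    · -- ω'' inside ξ
      subst hb
      rw [List.append_nil] at hζeq
      subst hζeq
      have hchain : Chain cs y (π ξ) := by
        apply ih ξ.length (by omega) (π ξ) y hξlen
        exact ⟨ξ, hξred, rfl, ω'', hasubξ, hπy⟩
      rw [hxval]
      exact hchain.trans (chain_single cs (cs.isReflection_simple d) hξasc)
    · -- ω'' = a ++ [d]
      subst hb
      subst hζeq
      have hared : cs.IsReduced a := by
        have := CoxeterSystem.IsReduced.take hred'' a.length
        rwa [List.take_left] at this
      have hyval : y = π a * s d := by
        rw [← hπy, cs.wordProd_append, cs.wordProd_singleton]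
      have haasc : ℓ (π a) < ℓ (π a * s d) := by
        have h1 : ℓ (π a * s d) = a.length + 1 := by
          rw [← cs.wordProd_singleton, ← cs.wordProd_append]
          rw [CoxeterSystem.IsReduced] at hred''
          rw [hred'', List.length_append, List.length_singleton]
        have h2 : ℓ (π a) ≤ a.length := cs.length_wordProd_le a
        omega
      have hchain : Chain cs (π a) (π ξ) := by
        apply ih ξ.length (by omega) (π ξ) (π a) hξlen
        exact ⟨ξ, hξred, rfl, a, hasubξ, rfl⟩
      rcases M0 (π a) (π ξ) hchain d (by omega) haasc with h1 | h1
      · rw [hyval, hxval]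
        exact h1.trans (chain_single cs (cs.isReflection_simple d) hξasc)
      · rw [hyval, hxval]
        exact h1

lemma bruhat_chain_equiv {y x : W} :
    (∃ ω, cs.IsReduced ω ∧ π ω = x ∧ ∃ ω', ω'.Sublist ω ∧ π ω' = y) ↔ Chain cs y x := by
  constructor
  · exact fun h => subword_chain cs (ℓ x) x y rfl h
  · intro h
    obtain ⟨τ, hτred, hτprod⟩ := cs.exists_reduced_word' x
    obtain ⟨τ', hsub, hred', hprod'⟩ := chain_subword cs h τ hτred hτprod.symm
    exact ⟨τ, hτred, hτprod.symm, τ', hsub, hprod'⟩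

lemma word_ending {w : W} {d : B} (hd : ℓ (w * s d) < ℓ w) :
    ∃ ρ₀ : List B, cs.IsReduced ρ₀ ∧ π ρ₀ = w * s d ∧ cs.IsReduced (ρ₀ ++ [d])
      ∧ π (ρ₀ ++ [d]) = w := by
  obtain ⟨ρ₀, hρ₀red, hρ₀prod⟩ := cs.exists_reduced_word' (w * s d)
  have hdl := descent_len cs hd
  refine ⟨ρ₀, hρ₀red, hρ₀prod.symm, ?_, ?_⟩
  · rw [CoxeterSystem.IsReduced, cs.wordProd_append, cs.wordProd_singleton, ← hρ₀prod,
      mul_assoc, cs.simple_mul_simple_self, mul_one, List.length_append,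
      List.length_singleton]
    rw [CoxeterSystem.IsReduced] at hρ₀red
    rw [← hρ₀red, ← hρ₀prod]
    omega
  · rw [cs.wordProd_append, cs.wordProd_singleton, ← hρ₀prod, mul_assoc,
      cs.simple_mul_simple_self, mul_one]

lemma subword_cases {u w : W} {d : B} (h : Chain cs u w) (hd : ℓ (w * s d) < ℓ w) :
    Chain cs u (w * s d) ∨ (ℓ (u * s d) < ℓ u ∧ Chain cs (u * s d) (w * s d)) := by
  obtain ⟨ρ₀, hρ₀red, hρ₀prod, hρred, hρprod⟩ := word_ending cs hd
  obtain ⟨ζ, hζsub, hζred, hζprod⟩ := chain_subword cs h (ρ₀ ++ [d]) hρred hρprod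
  obtain ⟨a, b, hζeq, hasub, hbsub⟩ := List.sublist_append_iff.mp hζsub
  rcases List.sublist_singleton.mp hbsub with hb | hb
  · subst hb
    rw [List.append_nil] at hζeq
    subst hζeq
    left
    rw [← hρ₀prod]
    exact (bruhat_chain_equiv cs).mp ⟨ρ₀, hρ₀red, rfl, ζ, hasub, hζprod⟩
  · subst hb
    subst hζeq
    right
    have hared : cs.IsReduced a := by
      have := CoxeterSystem.IsReduced.take hζred a.length
      rwa [List.take_left] at this
    have hπa : π a * s d = u := by
      rw [← cs.wordProd_singleton, ← cs.wordProd_append, hζprod]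
    have husd : u * s d = π a := by
      rw [← hπa, mul_assoc, cs.simple_mul_simple_self, mul_one]
    constructor
    · have h1 : ℓ (u * s d) = a.length := by rw [husd]; exact hared
      have h2 : ℓ u = a.length + 1 := by
        rw [← hζprod]
        rw [CoxeterSystem.IsReduced] at hζred
        rw [hζred, List.length_append, List.length_singleton]
      omega
    · rw [← hρ₀prod, husd]
      exact (bruhat_chain_equiv cs).mp ⟨ρ₀, hρ₀red, rfl, a, hasub, rfl⟩

/-- Lifting property, part 1. -/
lemma Z1 {u w : W} {d : B} (h : Chain cs u w) (hd : ℓ (w * s d) < ℓ w)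
    (hu : ℓ (u * s d) < ℓ u) : Chain cs (u * s d) (w * s d) := by
  rcases subword_cases cs h hd with h1 | ⟨_, h1⟩
  · exact (chain_descent cs hu).trans h1
  · exact h1

/-- Lifting property, part 2. -/
lemma Z2 {u w : W} {d : B} (h : Chain cs u w) (hd : ℓ (w * s d) < ℓ w)
    (hu : ℓ u < ℓ (u * s d)) : Chain cs u (w * s d) := by
  rcases subword_cases cs h hd with h1 | ⟨h2, _⟩
  · exact h1
  · omega

/-- Lifting property, part 3. -/
lemma Z3 {u w : W} {d : B} (h : Chain cs u w) (hd : ℓ (w * s d) < ℓ w) :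
    Chain cs (u * s d) w := by
  rcases asc_or_desc cs u d with hu | hu
  · -- ascent at u : u ≤ w * s d, then append d
    have h1 : Chain cs u (w * s d) := Z2 cs h hd hu
    obtain ⟨ρ₀, hρ₀red, hρ₀prod, hρred, hρprod⟩ := word_ending cs hd
    obtain ⟨ζ, hζsub, hζred, hζprod⟩ := chain_subword cs h1 ρ₀ hρ₀red hρ₀prod
    apply (bruhat_chain_equiv cs).mp
    refine ⟨ρ₀ ++ [d], hρred, hρprod, ζ ++ [d], ?_, ?_⟩
    · exact List.Sublist.append hζsub (List.Sublist.refl [d])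
    · rw [cs.wordProd_append, cs.wordProd_singleton, hζprod]
  · exact (chain_descent cs hu).trans h

lemma pair_cancel {a b : ℕ} (h : a + 1 = b ∨ b + 1 = a) :
    ((-1 : ℤ) ^ a) + ((-1 : ℤ) ^ b) = 0 := by
  rcases h with h | h <;> subst h <;> rw [pow_succ] <;> ring

lemma chain_lt_of_ne {y x : W} (h : Chain cs y x) (hne : y ≠ x) : ℓ y < ℓ x := by
  rcases h.length_le.lt_or_eq with h1 | h1
  · exact h1
  · exact absurd (h.eq_of_length_ge h1.ge) hne

theorem verma [Fintype W] : ∀ (n : ℕ) (x y : W), ℓ x = n → Chain cs y x → y ≠ x →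
    ∑ z ∈ Finset.univ.filter (fun z => Chain cs y z ∧ Chain cs z x), ((-1 : ℤ) ^ ℓ z) = 0 := by
  intro n
  induction n using Nat.strong_induction_on with
  | _ n ih =>
  intro x y hn hch hne
  have hylt : ℓ y < ℓ x := chain_lt_of_ne cs hch hne
  have hxne1 : x ≠ 1 := by
    rintro rfl
    rw [cs.length_one] at hylt
    omega
  obtain ⟨d, hd⟩ := cs.exists_rightDescent_of_ne_one hxne1
  have hd' : ℓ (x * s d) < ℓ x := hd
  have hsdne : ∀ z : W, z * s d ≠ z := by
    intro z hz
    exact cs.length_mul_simple_ne z d (by rw [hz])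
  have hsdinv : ∀ z : W, z * s d * s d = z := by
    intro z
    rw [mul_assoc, cs.simple_mul_simple_self, mul_one]
  have hcancel : ∀ z : W, ((-1 : ℤ) ^ ℓ z) + ((-1 : ℤ) ^ ℓ (z * s d)) = 0 := by
    intro z
    apply pair_cancel
    rcases asc_or_desc cs z d with h1 | h1
    · left; have := ascent_len cs h1; omega
    · right; have := descent_len cs h1; omega
  rcases asc_or_desc cs y d with hy | hy
  · -- Case a : d is an ascent of y ; the interval pairs up under right mult by s d
    apply Finset.sum_involution (fun z _ => z * s d)
    · exact fun z _ => hcancel z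
    · exact fun z _ _ => hsdne z
    · intro z hz
      rw [Finset.mem_filter] at hz ⊢
      obtain ⟨_, hyz, hzx⟩ := hz
      refine ⟨Finset.mem_univ _, ?_, Z3 cs hzx hd'⟩
      rcases asc_or_desc cs z d with h1 | h1
      · exact hyz.trans (chain_single cs (cs.isReflection_simple d) h1)
      · exact Z2 cs hyz h1 hy
    · exact fun z _ => hsdinv z
  · -- Case b : d is a descent of y
    have hq := Finset.sum_filter_add_sum_filter_not
      (Finset.univ.filter (fun z => Chain cs y z ∧ Chain cs z x))
      (fun z => ℓ (z * s d) < ℓ z ∧ ¬ Chain cs y (z * s d))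
      (fun z => ((-1 : ℤ) ^ ℓ z))
    -- the part where the involution works
    have hA : ∑ z ∈ (Finset.univ.filter (fun z => Chain cs y z ∧ Chain cs z x)).filter
        (fun z => ¬ (ℓ (z * s d) < ℓ z ∧ ¬ Chain cs y (z * s d))), ((-1 : ℤ) ^ ℓ z) = 0 := by
      apply Finset.sum_involution (fun z _ => z * s d)
      · exact fun z _ => hcancel z
      · exact fun z _ _ => hsdne z
      · intro z hz
        rw [Finset.mem_filter, Finset.mem_filter] at hz ⊢
        obtain ⟨⟨_, hyz, hzx⟩, hcond⟩ := hz
        push_neg at hcond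
        have hyzsd : Chain cs y (z * s d) := by
          rcases asc_or_desc cs z d with h1 | h1
          · exact hyz.trans (chain_single cs (cs.isReflection_simple d) h1)
          · exact hcond h1
        refine ⟨⟨Finset.mem_univ _, hyzsd, Z3 cs hzx hd'⟩, ?_⟩
        push_neg
        intro _
        rw [hsdinv z]
        exact hyz
      · exact fun z _ => hsdinv z
    -- the exceptional part is in bijection with a set J
    set J : Finset W := Finset.univ.filter
      (fun u => (Chain cs (y * s d) u ∧ Chain cs u (x * s d)) ∧
        (ℓ u < ℓ (u * s d) ∧ ¬ Chain cs y u)) with hJ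
    have hB : ∑ z ∈ (Finset.univ.filter (fun z => Chain cs y z ∧ Chain cs z x)).filter
        (fun z => ℓ (z * s d) < ℓ z ∧ ¬ Chain cs y (z * s d)), ((-1 : ℤ) ^ ℓ z)
        = ∑ u ∈ J, (-((-1 : ℤ) ^ ℓ u)) := by
      apply Finset.sum_nbij' (fun z => z * s d) (fun u => u * s d)
      · intro z hz
        rw [Finset.mem_filter, Finset.mem_filter] at hz
        obtain ⟨⟨_, hyz, hzx⟩, hzdesc, hzno⟩ := hz
        rw [hJ, Finset.mem_filter]
        refine ⟨Finset.mem_univ _, ⟨Z1 cs hyz hzdesc hy, Z1 cs hzx hd' hzdesc⟩, ?_, ?_⟩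
        · simp only [hsdinv]
          exact hzdesc
        · exact hzno
      · intro u hu
        rw [hJ, Finset.mem_filter] at hu
        obtain ⟨_, ⟨hyu, hux⟩, huasc, huno⟩ := hu
        rw [Finset.mem_filter, Finset.mem_filter]
        have husddesc : ℓ (u * s d * s d) < ℓ (u * s d) := by
          rw [hsdinv u]
          exact huasc
        have hyusd : Chain cs y (u * s d) := by
          have h1 : Chain cs (y * s d) (u * s d) :=
            hyu.trans (chain_single cs (cs.isReflection_simple d) huasc)
          have h2 := Z3 cs h1 husddesc
          rwa [hsdinv y] at h2
        have husdx : Chain cs (u * s d) x := by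
          have h1 : Chain cs u x := hux.trans (chain_descent cs hd')
          exact Z3 cs h1 hd'
        refine ⟨⟨Finset.mem_univ _, hyusd, husdx⟩, ?_, ?_⟩
        · simp only [hsdinv]
          exact huasc
        · simp only [hsdinv]
          exact huno
      · exact fun z _ => hsdinv z
      · exact fun u _ => hsdinv u
      · intro z hz
        rw [Finset.mem_filter, Finset.mem_filter] at hz
        obtain ⟨_, hzdesc, _⟩ := hz
        have h1 := descent_len cs hzdesc
        have : ℓ z = ℓ (z * s d) + 1 := by omega
        rw [this, pow_succ]
        ring
    -- J sums to zero using the smaller interval [y*s d, x*s d]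
    have hyne : y ≠ x * s d := by
      intro h1
      have : y * s d = x := by rw [h1, hsdinv]
      rw [← this] at hylt
      have := descent_len cs hy
      omega
    have hK : ∑ u ∈ Finset.univ.filter
        (fun u => Chain cs y u ∧ Chain cs u (x * s d)), ((-1 : ℤ) ^ ℓ u) = 0 := by
      by_cases hyx : Chain cs y (x * s d)
      · exact ih (ℓ (x * s d)) (by omega) (x * s d) y rfl hyx hyne
      · rw [Finset.filter_false_of_mem, Finset.sum_empty]
        intro u _ ⟨h1, h2⟩
        exact hyx (h1.trans h2)
    have hysdne : y * s d ≠ x * s d := by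
      intro h1
      apply hne
      have := congrArg (fun z => z * s d) h1
      simpa only [hsdinv] using this
    have hysdchain : Chain cs (y * s d) (x * s d) := Z1 cs hch hd' hy
    have hI' : ∑ u ∈ Finset.univ.filter
        (fun u => Chain cs (y * s d) u ∧ Chain cs u (x * s d)), ((-1 : ℤ) ^ ℓ u) = 0 :=
      ih (ℓ (x * s d)) (by omega) (x * s d) (y * s d) rfl hysdchain hysdne
    -- split I' into J and K
    have hsplit := Finset.sum_filter_add_sum_filter_not
      (Finset.univ.filter (fun u => Chain cs (y * s d) u ∧ Chain cs u (x * s d)))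
      (fun u => ℓ u < ℓ (u * s d) ∧ ¬ Chain cs y u)
      (fun u => ((-1 : ℤ) ^ ℓ u))
    have hJ_eq : (Finset.univ.filter
        (fun u => Chain cs (y * s d) u ∧ Chain cs u (x * s d))).filter
        (fun u => ℓ u < ℓ (u * s d) ∧ ¬ Chain cs y u) = J := by
      rw [hJ, Finset.filter_filter]
    have hK_eq : (Finset.univ.filter
        (fun u => Chain cs (y * s d) u ∧ Chain cs u (x * s d))).filter
        (fun u => ¬ (ℓ u < ℓ (u * s d) ∧ ¬ Chain cs y u))
        = Finset.univ.filter (fun u => Chain cs y u ∧ Chain cs u (x * s d)) := by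
      apply Finset.ext
      intro u
      rw [Finset.mem_filter, Finset.mem_filter, Finset.mem_filter]
      constructor
      · rintro ⟨⟨_, hyu, hux⟩, hcond⟩
        push_neg at hcond
        refine ⟨Finset.mem_univ _, ?_, hux⟩
        rcases asc_or_desc cs u d with h1 | h1
        · exact hcond h1
        · have h2 := Z3 cs hyu h1
          rwa [hsdinv y] at h2
      · rintro ⟨_, hyu, hux⟩
        have hysdy : Chain cs (y * s d) y := chain_descent cs hy
        refine ⟨⟨Finset.mem_univ _, hysdy.trans hyu, hux⟩, ?_⟩
        push_neg
        intro _
        exact hyu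
    have hJ_zero : ∑ u ∈ J, ((-1 : ℤ) ^ ℓ u) = 0 := by
      rw [hJ_eq, hK_eq] at hsplit
      linarith [hsplit, hK, hI']
    rw [← hq, hA, hB, add_zero, Finset.sum_neg_distrib, hJ_zero, neg_zero]

end CoxAux

end Aux

lemma powsub (a b : ℕ) (h : b ≤ a) : (-1 : ℤ) ^ (a - b) = (-1) ^ a * (-1) ^ b := by
  have h1 : (-1 : ℤ) ^ a = (-1) ^ (a - b) * (-1) ^ b := by
    rw [← pow_add, Nat.sub_add_cancel h]
  rw [h1, mul_assoc, ← mul_pow]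
  norm_num

/-- The Möbius function of the Bruhat order on a (finite) Coxeter group is
`μ(y, x) = (-1)^(l(x) - l(y))` for all `y ≤ x`. -/
theorem bruhat_mobius {B W : Type*} [Group W] [Fintype W] [DecidableEq W]
    {M : CoxeterMatrix B} (cs : CoxeterSystem M W)
    (μ : W → W → ℤ)
    (hrefl : ∀ x : W, μ x x = 1)
    (hsum : ∀ y x : W, BruhatLE cs y x → y ≠ x →
      ∑ z ∈ univ.filter (fun z => BruhatLE cs y z ∧ BruhatLE cs z x), μ y z = 0) :
    ∀ y x : W, BruhatLE cs y x →
      μ y x = (-1) ^ (cs.length x - cs.length y) := by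
  have hequiv : ∀ y x : W, BruhatLE cs y x ↔ CoxAux.Chain cs y x := by
    intro y x
    rw [← CoxAux.bruhat_chain_equiv cs]
    exact Iff.rfl
  suffices H : ∀ (n : ℕ) (x y : W), cs.length x = n → BruhatLE cs y x →
      μ y x = (-1) ^ (cs.length x - cs.length y) by
    intro y x hyx
    exact H (cs.length x) x y rfl hyx
  intro n
  induction n using Nat.strong_induction_on with
  | _ n ih =>
  intro x y hn hyx
  by_cases hne : y = x
  · subst hne
    simp [hrefl]
  · have hch : CoxAux.Chain cs y x := (hequiv y x).mp hyx
    have hylt : cs.length y < cs.length x := CoxAux.chain_lt_of_ne cs hch hne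
    have hsum0 := hsum y x hyx hne
    set I := univ.filter (fun z => BruhatLE cs y z ∧ BruhatLE cs z x) with hI
    have hIC : I = univ.filter (fun z => CoxAux.Chain cs y z ∧ CoxAux.Chain cs z x) := by
      rw [hI]
      apply Finset.filter_congr
      intro z _
      rw [hequiv y z, hequiv z x]
    have hVer : ∑ z ∈ I, ((-1 : ℤ) ^ cs.length z) = 0 := by
      rw [hIC]
      exact CoxAux.verma cs (cs.length x) x y rfl hch hne
    have hxmem : x ∈ I := by
      rw [hI, Finset.mem_filter]
      exact ⟨Finset.mem_univ _, hyx, (hequiv x x).mpr (CoxAux.Chain.refl x)⟩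
    have h1 : μ y x + ∑ z ∈ I.erase x, μ y z = ∑ z ∈ I, μ y z :=
      Finset.add_sum_erase I (μ y) hxmem
    have h2 : (-1 : ℤ) ^ cs.length x + ∑ z ∈ I.erase x, ((-1 : ℤ) ^ cs.length z)
        = ∑ z ∈ I, ((-1 : ℤ) ^ cs.length z) :=
      Finset.add_sum_erase I (fun z => (-1 : ℤ) ^ cs.length z) hxmem
    have h3 : ∀ z ∈ I.erase x, μ y z = (-1 : ℤ) ^ cs.length z * (-1) ^ cs.length y := by
      intro z hz
      rw [Finset.mem_erase] at hz
      obtain ⟨hzne, hzI⟩ := hz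
      rw [hI, Finset.mem_filter] at hzI
      obtain ⟨_, hyz, hzx⟩ := hzI
      have hzlt : cs.length z < cs.length x :=
        CoxAux.chain_lt_of_ne cs ((hequiv z x).mp hzx) hzne
      have hyle : cs.length y ≤ cs.length z := ((hequiv y z).mp hyz).length_le
      rw [ih (cs.length z) (by omega) z y rfl hyz, powsub _ _ hyle]
    have h4 : ∑ z ∈ I.erase x, μ y z
        = (∑ z ∈ I.erase x, ((-1 : ℤ) ^ cs.length z)) * (-1) ^ cs.length y := by
      rw [Finset.sum_mul]
      exact Finset.sum_congr rfl h3
    have h5 : ∑ z ∈ I.erase x, ((-1 : ℤ) ^ cs.length z) = -((-1) ^ cs.length x) := by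
      linarith [h2, hVer]
    rw [powsub (cs.length x) (cs.length y) hylt.le]
    have h6 : μ y x = -∑ z ∈ I.erase x, μ y z := by
      linarith [h1, hsum0]
    rw [h6, h4, h5]
    ring
end

section
/- Let $A$ be a finite-dimensional algebra and suppose the simple modules are indexed by a finite poset with rank function $l$ with maximal rank $N$, such that for each simple $L(\lambda)$ there is a module $\Delta(\lambda)$ of projective dimension at most $l(\lambda)$ with top $L(\lambda)$ whose radical has all composition factors $L(\mu)$ with $l(\mu) > l(\lambda)$, and $\Delta(\lambda) = L(\lambda)$ when $l(\lambda) = N$. Then the projective dimension of every simple module $L(\lambda)$ is at most $2N - l(\lambda)$, and the global dimension of $A$ is at most $2N$. -/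
universe u

/-- `pdLE A n M` means the `A`-module `M` has projective dimension at most `n`, i.e. it admits
a projective resolution of length at most `n`. -/
def pdLE (A : Type u) [Ring A] : ℕ → ∀ (M : Type u) [AddCommGroup M] [Module A M], Prop
  | 0, M, _, _ => Module.Projective A M
  | n + 1, M, _, _ =>
      Module.Projective A M ∨
      ∃ (P : Type u) (_ : AddCommGroup P) (_ : Module A P) (f : P →ₗ[A] M),
        Module.Projective A P ∧ Function.Surjective f ∧ pdLE A n (LinearMap.ker f)

variable {A : Type u} [Ring A]

theorem pdLE_of_projective {n : ℕ} {M : Type u} [AddCommGroup M] [Module A M]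
    (h : Module.Projective A M) : pdLE A n M := by
  cases n with
  | zero => exact h
  | succ n => exact Or.inl h

theorem pdLE_succ_iff {n : ℕ} {M : Type u} [AddCommGroup M] [Module A M] :
    pdLE A (n + 1) M ↔
      ∃ (P : Type u) (_ : AddCommGroup P) (_ : Module A P) (f : P →ₗ[A] M),
        Module.Projective A P ∧ Function.Surjective f ∧ pdLE A n (LinearMap.ker f) := by
  constructor
  · rintro (h | h)
    · refine ⟨M, ‹_›, ‹_›, LinearMap.id, h, Function.surjective_id, ?_⟩
      have : Subsingleton ↥(LinearMap.ker (LinearMap.id (R := A) (M := M))) := by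
        rw [LinearMap.ker_id]; infer_instance
      exact pdLE_of_projective inferInstance
    · exact h
  · exact Or.inr

theorem pdLE_succ {n : ℕ} {M : Type u} [AddCommGroup M] [Module A M]
    (h : pdLE A n M) : pdLE A (n + 1) M := by
  induction n generalizing M with
  | zero => exact Or.inl h
  | succ n ih =>
    rcases h with h | ⟨P, _, _, f, hP, hf, hker⟩
    · exact Or.inl h
    · exact Or.inr ⟨P, ‹_›, ‹_›, f, hP, hf, ih hker⟩

theorem pdLE_mono {n m : ℕ} (hnm : n ≤ m) {M : Type u} [AddCommGroup M] [Module A M]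
    (h : pdLE A n M) : pdLE A m M := by
  induction hnm with
  | refl => exact h
  | step _ ih => exact pdLE_succ ih

theorem pdLE_of_equiv {n : ℕ} {M M' : Type u} [AddCommGroup M] [Module A M]
    [AddCommGroup M'] [Module A M'] (e : M ≃ₗ[A] M') (h : pdLE A n M) : pdLE A n M' := by
  cases n with
  | zero => haveI : Module.Projective A M := h; exact Module.Projective.of_equiv e
  | succ n =>
    rcases h with h | ⟨P, _, _, f, hP, hf, hker⟩
    · haveI : Module.Projective A M := h; exact Or.inl (Module.Projective.of_equiv e)
    · refine Or.inr ⟨P, ‹_›, ‹_›, e.toLinearMap.comp f, hP, e.surjective.comp hf, ?_⟩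
      have : LinearMap.ker (e.toLinearMap.comp f) = LinearMap.ker f := by
        rw [LinearMap.ker_comp, LinearMap.ker_eq_bot.2 e.injective, Submodule.comap_bot]
      rw [this]; exact hker

/-- Horseshoe-type lemma: extension of two modules of p.d. ≤ n has p.d. ≤ n. -/
theorem pdLE_ext : ∀ (n : ℕ) (K M Q : Type u) [AddCommGroup K] [Module A K]
    [AddCommGroup M] [Module A M] [AddCommGroup Q] [Module A Q]
    (f : K →ₗ[A] M) (g : M →ₗ[A] Q),
    Function.Injective f → Function.Surjective g → LinearMap.range f = LinearMap.ker g →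
    pdLE A n K → pdLE A n Q → pdLE A n M := by
  intro n
  induction n with
  | zero =>
    intro K M Q _ _ _ _ _ _ f g hf hg hex hK hQ
    haveI : Module.Projective A K := hK
    haveI : Module.Projective A Q := hQ
    obtain ⟨s, hs⟩ := Module.projective_lifting_property g LinearMap.id hg
    have hgs : ∀ q, g (s q) = q := fun q => congrArg (· q) (congrArg DFunLike.coe hs)
    have hgf : ∀ x, g (f x) = 0 := by
      intro x
      have : f x ∈ LinearMap.ker g := hex ▸ LinearMap.mem_range_self f x
      exact this
    have hbij : Function.Bijective (f.coprod s) := by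
      constructor
      · intro a b hab
        simp only [LinearMap.coprod_apply] at hab
        have h2 : a.2 = b.2 := by
          have := congrArg g hab
          simpa only [map_add, hgf, hgs, zero_add] using this
        have h1 : f a.1 = f b.1 := by
          rw [h2] at hab; exact add_right_cancel hab
        exact Prod.ext (hf h1) h2
      · intro m
        have : m - s (g m) ∈ LinearMap.range f := by
          rw [hex]
          simp [LinearMap.mem_ker, hgs]
        obtain ⟨k, hk⟩ := this
        exact ⟨(k, g m), by simp [LinearMap.coprod_apply, hk]⟩
    exact Module.Projective.of_equiv (LinearEquiv.ofBijective (f.coprod s) hbij)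
  | succ n ih =>
    intro K M Q _ _ _ _ _ _ f g hf hg hex hK hQ
    obtain ⟨PK, _, _, pK, hPK, hpK, hkK⟩ := pdLE_succ_iff.mp hK
    obtain ⟨PQ, _, _, pQ, hPQ, hpQ, hkQ⟩ := pdLE_succ_iff.mp hQ
    haveI := hPK; haveI := hPQ
    obtain ⟨h, hh⟩ := Module.projective_lifting_property g pQ hg
    have hgh : ∀ q, g (h q) = pQ q := fun q => congrArg (· q) (congrArg DFunLike.coe hh)
    have hgf : ∀ x, g (f x) = 0 := by
      intro x
      have : f x ∈ LinearMap.ker g := hex ▸ LinearMap.mem_range_self f x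
      exact this
    set φ : PK × PQ →ₗ[A] M := (f.comp pK).coprod h with hφdef
    have hφ : ∀ x : PK × PQ, φ x = f (pK x.1) + h x.2 := fun x => rfl
    have hφsurj : Function.Surjective φ := by
      intro m
      obtain ⟨q', hq'⟩ := hpQ (g m)
      have : m - h q' ∈ LinearMap.range f := by
        rw [hex]; simp [LinearMap.mem_ker, hgh, hq']
      obtain ⟨kk, hkk⟩ := this
      obtain ⟨p, hp⟩ := hpK kk
      exact ⟨(p, q'), by rw [hφ]; simp [hp, hkk]⟩
    refine Or.inr ⟨PK × PQ, inferInstance, inferInstance, φ, inferInstance, hφsurj, ?_⟩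
    -- SES  ker pK → ker φ → ker pQ
    have hmem1 : ∀ x : ↥(LinearMap.ker pK), ((x : PK), (0 : PQ)) ∈ LinearMap.ker φ := by
      intro x
      have hx : pK (x : PK) = 0 := x.2
      simp [LinearMap.mem_ker, hφ, hx]
    set α : ↥(LinearMap.ker pK) →ₗ[A] ↥(LinearMap.ker φ) :=
      LinearMap.codRestrict _ ((LinearMap.inl A PK PQ).comp (LinearMap.ker pK).subtype) hmem1
      with hαdef
    have hα : ∀ x, ((α x : PK × PQ)) = ((x : PK), (0 : PQ)) := fun x => rfl
    have hmem2 : ∀ x : ↥(LinearMap.ker φ), (x : PK × PQ).2 ∈ LinearMap.ker pQ := by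
      intro x
      have hx : f (pK (x : PK × PQ).1) + h (x : PK × PQ).2 = 0 := x.2
      have : g (f (pK (x : PK × PQ).1) + h (x : PK × PQ).2) = 0 := by rw [hx]; simp
      simpa [map_add, hgf, hgh] using this
    set β : ↥(LinearMap.ker φ) →ₗ[A] ↥(LinearMap.ker pQ) :=
      LinearMap.codRestrict _ ((LinearMap.snd A PK PQ).comp (LinearMap.ker φ).subtype) hmem2
      with hβdef
    have hβ : ∀ x, ((β x : PQ)) = (x : PK × PQ).2 := fun x => rfl
    have hαinj : Function.Injective α := by
      intro a b hab
      have := congrArg (fun z : ↥(LinearMap.ker φ) => (z : PK × PQ).1) hab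
      simp only [hα] at this
      exact Subtype.ext this
    have hβsurj : Function.Surjective β := by
      rintro ⟨q, hq⟩
      have hq' : pQ q = 0 := hq
      have : h q ∈ LinearMap.range f := by
        rw [hex]; simp [LinearMap.mem_ker, hgh, hq']
      obtain ⟨kk, hkk⟩ := this
      obtain ⟨p, hp⟩ := hpK kk
      have hmem : ((-p, q) : PK × PQ) ∈ LinearMap.ker φ := by
        simp [LinearMap.mem_ker, hφ, hp, hkk]
      exact ⟨⟨(-p, q), hmem⟩, Subtype.ext rfl⟩
    have hexαβ : LinearMap.range α = LinearMap.ker β := by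
      ext x
      constructor
      · rintro ⟨y, rfl⟩
        have : (β (α y) : PQ) = 0 := by rw [hβ, hα]
        exact Subtype.ext this
      · intro hx
        have hx2 : (x : PK × PQ).2 = 0 := by
          have : (β x : PQ) = 0 := by rw [hx]; rfl
          rwa [hβ] at this
        have hxk : f (pK (x : PK × PQ).1) + h (x : PK × PQ).2 = 0 := x.2
        rw [hx2, map_zero, add_zero] at hxk
        have hpk0 : pK (x : PK × PQ).1 = 0 := hf (by simpa using hxk)
        refine ⟨⟨(x : PK × PQ).1, hpk0⟩, ?_⟩
        apply Subtype.ext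
        rw [hα]
        exact (Prod.ext rfl hx2.symm)
    exact ih _ _ _ α β hαinj hβsurj hexαβ hkK hkQ

set_option maxHeartbeats 1000000 in
/-- If `0 → K → M → Q → 0` with `pd K ≤ n` and `pd M ≤ n` then `pd Q ≤ n+1`. -/
theorem pdLE_quot (n : ℕ) (K M Q : Type u) [AddCommGroup K] [Module A K]
    [AddCommGroup M] [Module A M] [AddCommGroup Q] [Module A Q]
    (f : K →ₗ[A] M) (g : M →ₗ[A] Q)
    (hf : Function.Injective f) (hg : Function.Surjective g)
    (hex : LinearMap.range f = LinearMap.ker g)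
    (hK : pdLE A n K) (hM : pdLE A n M) : pdLE A (n + 1) Q := by
  obtain ⟨P, _, _, p, hP, hp, hker⟩ := pdLE_succ_iff.mp (pdLE_succ hM)
  -- hker : pdLE A n (ker p)
  have hkerle : LinearMap.ker p ≤ LinearMap.ker (g.comp p) := by
    intro x hx
    have : p x = 0 := hx
    simp [LinearMap.mem_ker, this]
  set ι : ↥(LinearMap.ker p) →ₗ[A] ↥(LinearMap.ker (g.comp p)) := Submodule.inclusion hkerle
  have hmemρ : ∀ x : ↥(LinearMap.ker (g.comp p)), p (x : P) ∈ LinearMap.range f := by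
    intro x
    rw [hex]
    exact x.2
  set ρ : ↥(LinearMap.ker (g.comp p)) →ₗ[A] ↥(LinearMap.range f) :=
    LinearMap.codRestrict _ (p.comp (LinearMap.ker (g.comp p)).subtype) hmemρ
  set eK : K ≃ₗ[A] ↥(LinearMap.range f) := LinearEquiv.ofInjective f hf
  set δ : ↥(LinearMap.ker (g.comp p)) →ₗ[A] K := (eK.symm.toLinearMap).comp ρ
  have hρ : ∀ x, ((ρ x : M)) = p (x : P) := fun _ => rfl
  have hδ : ∀ x, f (δ x) = p (x : P) := by
    intro x
    have h1 : eK (δ x) = ρ x := by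
      simp only [δ, LinearMap.coe_comp, LinearEquiv.coe_coe, Function.comp_apply,
        LinearEquiv.apply_symm_apply]
    have h2 := congrArg (Subtype.val) h1
    rw [hρ] at h2
    rw [← h2]
    simp only [eK, LinearEquiv.ofInjective_apply]
  have hδsurj : Function.Surjective δ := by
    intro kk
    have hfk : f kk ∈ LinearMap.ker g := hex ▸ LinearMap.mem_range_self f kk
    obtain ⟨x, hx⟩ := hp (f kk)
    have hxmem : x ∈ LinearMap.ker (g.comp p) := by
      simp only [LinearMap.mem_ker, LinearMap.comp_apply, hx]
      exact hfk
    refine ⟨⟨x, hxmem⟩, hf ?_⟩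
    rw [hδ]
    exact hx
  have hιinj : Function.Injective ι := Submodule.inclusion_injective hkerle
  have hexιδ : LinearMap.range ι = LinearMap.ker δ := by
    ext x
    constructor
    · rintro ⟨y, rfl⟩
      have h0 : f (δ (ι y)) = 0 := by
        rw [hδ]
        exact y.2
      have : f (δ (ι y)) = f 0 := by rw [h0, map_zero]
      exact hf this
    · intro hx
      have hδx : δ x = 0 := hx
      have hpx : p (x : P) = 0 := by
        rw [← hδ, hδx, map_zero]
      exact ⟨⟨(x : P), hpx⟩, Subtype.ext rfl⟩
  have hkerpd : pdLE A n ↥(LinearMap.ker (g.comp p)) :=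
    pdLE_ext n _ _ _ ι δ hιinj hδsurj hexιδ hker hK
  exact Or.inr ⟨P, ‹_›, ‹_›, g.comp p, hP, hg.comp hp, hkerpd⟩



open DFinsupp in
theorem pdLE_dfinsupp {A : Type u} [Ring A] :
    ∀ (m : ℕ) (ι : Type u) (Mf : ι → Type u) [∀ i, AddCommGroup (Mf i)]
      [∀ i, Module A (Mf i)], (∀ i, pdLE A m (Mf i)) → pdLE A m (Π₀ i, Mf i) := by
  intro m
  induction m with
  | zero =>
    intro ι Mf _ _ h
    haveI : ∀ i, Module.Projective A (Mf i) := h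
    exact (inferInstance : Module.Projective A (Π₀ i, Mf i))
  | succ m ih =>
    intro ι Mf _ _ h
    letI := Classical.decEq ι
    choose P acg mod f hP hf hker using fun i => pdLE_succ_iff.mp (h i)
    letI : ∀ i, AddCommGroup (P i) := acg
    letI : ∀ i, Module A (P i) := mod
    haveI : ∀ i, Module.Projective A (P i) := hP
    set F : (Π₀ i, P i) →ₗ[A] Π₀ i, Mf i := DFinsupp.mapRange.linearMap f with hF
    have hFapp : ∀ (x : Π₀ i, P i) (i : ι), F x i = f i (x i) := by
      intro x i
      simp [hF, DFinsupp.mapRange_apply]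
    have hFsurj : Function.Surjective F := by
      intro y
      induction y using DFinsupp.induction with
      | h0 => exact ⟨0, map_zero F⟩
      | ha i b rest hri hb ihy =>
        obtain ⟨w, hw⟩ := ihy
        obtain ⟨x, hx⟩ := hf i b
        refine ⟨DFinsupp.single i x + w, ?_⟩
        rw [map_add, hw]
        congr 1
        ext j
        rw [hFapp]
        rcases eq_or_ne i j with rfl | hij
        · rw [DFinsupp.single_eq_same, DFinsupp.single_eq_same, hx]
        · rw [DFinsupp.single_eq_of_ne hij.symm, DFinsupp.single_eq_of_ne hij.symm, map_zero]
    -- kernel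
    have hmemG : ∀ x : Π₀ i, ↥(LinearMap.ker (f i)),
        (DFinsupp.mapRange.linearMap (fun i => (LinearMap.ker (f i)).subtype)) x
          ∈ LinearMap.ker F := by
      intro x
      rw [LinearMap.mem_ker]
      ext j
      rw [hFapp]
      have : ((DFinsupp.mapRange.linearMap (fun i => (LinearMap.ker (f i)).subtype)) x) j
          = ((x j : P j)) := by simp [DFinsupp.mapRange_apply]
      rw [this]
      have := (x j).2
      exact this
    set G : (Π₀ i, ↥(LinearMap.ker (f i))) →ₗ[A] ↥(LinearMap.ker F) :=
      LinearMap.codRestrict _ (DFinsupp.mapRange.linearMap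
        (fun i => (LinearMap.ker (f i)).subtype)) hmemG with hG
    have hGcoe : ∀ (x : Π₀ i, ↥(LinearMap.ker (f i))) (j : ι),
        ((G x : Π₀ i, P i)) j = ((x j : P j)) := by
      intro x j
      simp [hG, DFinsupp.mapRange_apply]
    have hGinj : Function.Injective G := by
      intro a b hab
      ext j
      have := congrArg (fun z : ↥(LinearMap.ker F) => ((z : Π₀ i, P i)) j) hab
      simp only [hGcoe] at this
      exact this
    have hGsurj : Function.Surjective G := by
      rintro ⟨v, hv⟩
      have main : ∀ v : Π₀ i, P i, v ∈ LinearMap.ker F →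
          ∃ w : Π₀ i, ↥(LinearMap.ker (f i)),
            (DFinsupp.mapRange.linearMap (fun i => (LinearMap.ker (f i)).subtype)) w = v := by
        intro v
        induction v using DFinsupp.induction with
        | h0 => exact fun _ => ⟨0, map_zero _⟩
        | ha i b rest hri hb ihv =>
          intro hmem
          have hcoords : ∀ j, f j ((DFinsupp.single i b + rest) j) = 0 := by
            intro j
            have := congrArg (fun z : Π₀ i, Mf i => z j) (LinearMap.mem_ker.mp hmem)
            simpa [hFapp] using this
          have hfb : f i b = 0 := by
            have := hcoords i
            simpa [DFinsupp.single_eq_same, hri] using this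
          have hrest : rest ∈ LinearMap.ker F := by
            rw [LinearMap.mem_ker]
            ext j
            rw [hFapp]
            rcases eq_or_ne i j with rfl | hij
            · rw [hri, map_zero]; rfl
            · have := hcoords j
              simpa [DFinsupp.single_eq_of_ne hij.symm] using this
          obtain ⟨w, hw⟩ := ihv hrest
          refine ⟨DFinsupp.single i ⟨b, hfb⟩ + w, ?_⟩
          rw [map_add, hw]
          congr 1
          ext j
          rcases eq_or_ne i j with rfl | hij
          · simp [DFinsupp.mapRange_apply, DFinsupp.single_eq_same]
          · simp [DFinsupp.mapRange_apply, DFinsupp.single_eq_of_ne hij]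
      obtain ⟨w, hw⟩ := main v hv
      exact ⟨w, Subtype.ext (by simpa [hG] using hw)⟩
    have hkerpd : pdLE A m (Π₀ i, ↥(LinearMap.ker (f i))) :=
      ih ι (fun i => ↥(LinearMap.ker (f i))) hker
    have : pdLE A m ↥(LinearMap.ker F) :=
      pdLE_of_equiv (LinearEquiv.ofBijective G ⟨hGinj, hGsurj⟩) hkerpd
    exact Or.inr ⟨Π₀ i, P i, inferInstance, inferInstance, F, inferInstance, hFsurj, this⟩




variable {A : Type u} [Ring A]

theorem pdLE_of_filtration {V : Type u} [AddCommGroup V] [Module A V]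
    {m : ℕ} {n : ℕ} (F : Fin (n + 1) → Submodule A V) (hmono : Monotone F)
    (h0 : F 0 = ⊥) (htop : F (Fin.last n) = ⊤)
    (hq : ∀ i : Fin n, pdLE A m
      (↥(F i.succ) ⧸ Submodule.comap (F i.succ).subtype (F i.castSucc))) :
    pdLE A m V := by
  have key : ∀ j : Fin (n + 1), pdLE A m ↥(F j) := by
    intro j
    induction j using Fin.induction with
    | zero =>
      haveI : Subsingleton ↥(F 0) := by rw [h0]; infer_instance
      exact pdLE_of_projective inferInstance
    | succ i ihj =>
      have hle : F i.castSucc ≤ F i.succ := hmono (Fin.castSucc_lt_succ (i := i)).le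
      set p : Submodule A ↥(F i.succ) := Submodule.comap (F i.succ).subtype (F i.castSucc)
      refine pdLE_ext m _ _ _ (Submodule.inclusion hle) p.mkQ
        (Submodule.inclusion_injective hle) p.mkQ_surjective ?_ ihj (hq i)
      rw [Submodule.ker_mkQ, Submodule.range_inclusion]
  have := key (Fin.last n)
  have h2 : pdLE A m ↥(⊤ : Submodule A V) := by rw [← htop]; exact this
  exact pdLE_of_equiv (Submodule.topEquiv) h2

/-- auxiliary: simple submodule gives semisimple module -/
theorem isSemisimple_of_isSimple {M : Type u} [AddCommGroup M] [Module A M]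
    (h : IsSimpleModule A M) : IsSemisimpleModule A M := by
  haveI := h
  infer_instance

theorem pdLE_of_isSemisimple {m : ℕ} {M : Type u} [AddCommGroup M] [Module A M]
    (hss : IsSemisimpleModule A M)
    (hsimp : ∀ (S : Submodule A M), IsSimpleModule A ↥S → pdLE A m ↥S) :
    pdLE A m M := by
  obtain ⟨s, hindep, hsup, hmem⟩ :=
    IsSemisimpleModule.exists_sSupIndep_sSup_simples_eq_top A M
  -- internal direct sum decomposition
  classical
  have hind : iSupIndep (fun i : s => (i : Submodule A M)) :=
    (sSupIndep_iff s).mp hindep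
  have hsup' : ⨆ i : s, (i : Submodule A M) = ⊤ := by
    rw [sSup_eq_iSup'] at hsup
    exact hsup
  have hint : DirectSum.IsInternal (fun i : s => (i : Submodule A M)) :=
    DirectSum.isInternal_submodule_of_iSupIndep_of_iSup_eq_top hind hsup'
  have hpd : pdLE A m (Π₀ i : s, ↥(Subtype.val i)) :=
    pdLE_dfinsupp m s (fun i : s => ↥(Subtype.val i))
      (fun i => hsimp _ (hmem i i.2))
  exact pdLE_of_equiv (LinearEquiv.ofBijective (DirectSum.coeLinearMap _) hint) hpd




/-- Any noetherian+artinian module admits a finite filtration with semisimple quotients. -/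
theorem exists_semisimple_filtration (A : Type u) [Ring A] (V : Type u) [AddCommGroup V]
    [Module A V] [IsNoetherian A V] [IsArtinian A V] :
    ∃ (m : ℕ) (S : Fin (m + 1) → Submodule A V), Monotone S ∧ S 0 = ⊥ ∧
      S (Fin.last m) = ⊤ ∧ ∀ i : Fin m, IsSemisimpleModule A
        (↥(S i.succ) ⧸ Submodule.comap (S i.succ).subtype (S i.castSucc)) := by
  classical
  -- socle series
  let soc : (p : Submodule A V) → Submodule A (V ⧸ p) := fun p =>
    sSup {W : Submodule A (V ⧸ p) | IsSimpleModule A ↥W}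
  let σ : ℕ → Submodule A V := fun n => Nat.rec (motive := fun _ => Submodule A V) ⊥ (fun _ p => Submodule.comap p.mkQ (soc p)) n
  have hσ0 : σ 0 = ⊥ := rfl
  have hσs : ∀ n, σ (n + 1) = Submodule.comap (σ n).mkQ (soc (σ n)) := fun n => rfl
  have hmono : Monotone σ := by
    apply monotone_nat_of_le_succ
    intro n
    rw [hσs]
    intro x hx
    have hx0 : (σ n).mkQ x = 0 := (Submodule.Quotient.mk_eq_zero _).mpr hx
    show (σ n).mkQ x ∈ soc (σ n)
    rw [hx0]; exact zero_mem _
  have hsocss : ∀ p : Submodule A V, IsSemisimpleModule A ↥(soc p) := by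
    intro p
    have : soc p = ⨆ W ∈ {W : Submodule A (V ⧸ p) | IsSimpleModule A ↥W}, W := sSup_eq_iSup
    rw [this]
    exact isSemisimpleModule_biSup_of_isSemisimpleModule_submodule
      (fun W hW => by haveI : IsSimpleModule A ↥W := hW; infer_instance)
  -- stabilization
  obtain ⟨n, hn⟩ := monotone_stabilizes_iff_noetherian.mpr inferInstance ⟨σ, hmono⟩
  have hσtop : σ n = ⊤ := by
    by_contra hne
    have hlt : σ n < ⊤ := lt_top_iff_ne_top.mpr hne
    haveI : Nontrivial (V ⧸ σ n) := Submodule.Quotient.nontrivial_iff.mpr hlt.ne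
    obtain ⟨a, ha⟩ := IsAtomic.exists_atom (Submodule A (V ⧸ σ n))
    have hale : a ≤ soc (σ n) := le_sSup (by
      show IsSimpleModule A ↥a
      exact isSimpleModule_iff_isAtom.mpr ha)
    have heq : σ n = σ (n + 1) := hn (n+1) (Nat.le_succ n)
    have hmap : Submodule.map (σ n).mkQ (σ (n+1)) = soc (σ n) := by
      rw [hσs]
      exact Submodule.map_comap_eq_of_surjective (σ n).mkQ_surjective _
    have hmapbot : Submodule.map (σ n).mkQ (σ n) = ⊥ := by
      apply le_bot_iff.mp
      rintro x ⟨y, hy, rfl⟩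
      exact (Submodule.Quotient.mk_eq_zero _).mpr hy
    rw [← heq, hmapbot] at hmap
    rw [← hmap] at hale
    exact ha.1 (le_bot_iff.mp hale)
  refine ⟨n, fun j => σ j, fun i j hij => hmono (by exact_mod_cast hij), hσ0, hσtop, ?_⟩
  intro i
  -- layer: ↥(σ (i+1)) ⧸ comap subtype (σ i) ≃ map mkQ (σ (i+1)) = soc (σ i)
  set p : Submodule A V := σ i.castSucc with hp
  set q : Submodule A V := σ i.succ with hq
  have hpq : p ≤ q := hmono (le_of_lt (by exact_mod_cast Fin.castSucc_lt_succ (i := i)))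
  set ψ : ↥q →ₗ[A] V ⧸ p := p.mkQ.comp q.subtype with hψ
  have hkerψ : LinearMap.ker ψ = Submodule.comap q.subtype p := by
    rw [hψ, LinearMap.ker_comp, Submodule.ker_mkQ]
  have hrangeψ : LinearMap.range ψ = Submodule.map p.mkQ q := by
    rw [hψ, LinearMap.range_comp, Submodule.range_subtype]
  have hmapsoc : Submodule.map p.mkQ q = soc p := by
    have : q = Submodule.comap p.mkQ (soc p) := by
      rw [hq, hp]
      show σ (i.val + 1) = _
      rw [hσs]
      simp [Fin.coe_castSucc]
    rw [this]
    exact Submodule.map_comap_eq_of_surjective p.mkQ_surjective _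
  have e : (↥q ⧸ Submodule.comap q.subtype p) ≃ₗ[A] ↥(LinearMap.range ψ) :=
    (Submodule.quotEquivOfEq _ _ hkerψ.symm).trans (LinearMap.quotKerEquivRange ψ)
  have hss : IsSemisimpleModule A ↥(LinearMap.range ψ) := by
    rw [hrangeψ, hmapsoc]
    exact hsocss p
  exact IsSemisimpleModule.congr e






theorem pdLE_of_simples (A : Type u) [Ring A] (n : ℕ)
    (hsimp : ∀ (W : Type u) [AddCommGroup W] [Module A W], IsSimpleModule A W → pdLE A n W)
    (m : ℕ) (S : Fin (m + 1) → Submodule A A) (hmono : Monotone S) (h0 : S 0 = ⊥)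
    (hlast : S (Fin.last m) = ⊤)
    (hss : ∀ i : Fin m, IsSemisimpleModule A
      (↥(S i.succ) ⧸ Submodule.comap (S i.succ).subtype (S i.castSucc)))
    (M : Type u) [AddCommGroup M] [Module A M] : pdLE A n M := by
  classical
  set φ : M → (A →ₗ[A] M) := fun x => LinearMap.toSpanSingleton A M x with hφ
  set T : Fin (m + 1) → Submodule A M := fun j => ⨆ x : M, Submodule.map (φ x) (S j) with hT
  have hTmono : Monotone T := by
    intro i j hij
    exact iSup_mono (fun x => Submodule.map_mono (hmono hij))
  have hT0 : T 0 = ⊥ := by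
    rw [hT]
    simp [h0, Submodule.map_bot]
  have hTlast : T (Fin.last m) = ⊤ := by
    rw [hT, eq_top_iff]
    intro x _
    have hx : x ∈ Submodule.map (φ x) (S (Fin.last m)) := by
      rw [hlast]
      exact ⟨1, trivial, by simp [hφ, LinearMap.toSpanSingleton_apply]⟩
    exact Submodule.mem_iSup_of_mem x hx
  apply pdLE_of_filtration T hTmono hT0 hTlast
  intro i
  set p : Submodule A M := T i.castSucc with hpdef
  set q : Submodule A M := T i.succ with hqdef
  set ψ : ↥q →ₗ[A] M ⧸ p := p.mkQ.comp q.subtype with hψ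
  have hkerψ : LinearMap.ker ψ = Submodule.comap q.subtype p := by
    rw [hψ, LinearMap.ker_comp, Submodule.ker_mkQ]
  have hrangeψ : LinearMap.range ψ = Submodule.map p.mkQ q := by
    rw [hψ, LinearMap.range_comp, Submodule.range_subtype]
  have e : (↥q ⧸ Submodule.comap q.subtype p) ≃ₗ[A] ↥(LinearMap.range ψ) :=
    (Submodule.quotEquivOfEq _ _ hkerψ.symm).trans (LinearMap.quotKerEquivRange ψ)
  -- semisimplicity of map p.mkQ q
  have hq2 : Submodule.map p.mkQ q = ⨆ x : M, Submodule.map (p.mkQ.comp (φ x)) (S i.succ) := by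
    rw [hqdef, hT]
    rw [Submodule.map_iSup]
    refine iSup_congr fun x => ?_
    rw [Submodule.map_comp]
  have hD : ∀ x : M, IsSemisimpleModule A
      ↥(Submodule.map (p.mkQ.comp (φ x)) (S i.succ)) := by
    intro x
    haveI := hss i
    set ρ : ↥(S i.succ) →ₗ[A] M ⧸ p := (p.mkQ.comp (φ x)).comp (S i.succ).subtype with hρ
    have hle : Submodule.comap (S i.succ).subtype (S i.castSucc) ≤ LinearMap.ker ρ := by
      intro s hs
      have h1 : φ x ((s : A)) ∈ p := by
        rw [hpdef, hT]
        refine Submodule.mem_iSup_of_mem x ⟨(s : A), hs, rfl⟩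
      show p.mkQ (φ x ((s : A))) = 0
      exact (Submodule.Quotient.mk_eq_zero _).mpr h1
    set lift := Submodule.liftQ _ ρ hle
    have hrangelift : LinearMap.range lift = LinearMap.range ρ := Submodule.range_liftQ _ _ _
    have hrangeρ : LinearMap.range ρ = Submodule.map (p.mkQ.comp (φ x)) (S i.succ) := by
      rw [hρ, LinearMap.range_comp, Submodule.range_subtype]
    have : IsSemisimpleModule A ↥(LinearMap.range lift) := IsSemisimpleModule.range lift
    rw [hrangelift, hrangeρ] at this
    exact this
  have hssq : IsSemisimpleModule A ↥(Submodule.map p.mkQ q) := by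
    rw [hq2]
    have := isSemisimpleModule_biSup_of_isSemisimpleModule_submodule
      (s := (Set.univ : Set M))
      (p := fun x => Submodule.map (p.mkQ.comp (φ x)) (S i.succ)) (fun x _ => hD x)
    rwa [iSup_univ] at this
  have hssr : IsSemisimpleModule A ↥(LinearMap.range ψ) := by
    rw [hrangeψ]; exact hssq
  have hssl : IsSemisimpleModule A (↥q ⧸ Submodule.comap q.subtype p) :=
    IsSemisimpleModule.congr e
  exact pdLE_of_isSemisimple hssl (fun W hW => hsimp ↥W hW)


/-- Let `A` be a finite-dimensional algebra whose simple modules `L λ` are indexed by a finite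
poset with rank function `l` of maximal rank `N`, and suppose for each `λ` there is a module
`Δ λ` with `p.d.(Δ λ) ≤ l λ`, a surjection `Δ λ ↠ L λ` whose kernel has all composition
factors `L μ` with `l μ > l λ`, and `Δ λ = L λ` when `l λ = N`. Then
`p.d.(L λ) ≤ 2N - l λ` for every `λ`, and the global dimension of `A` is at most `2N`. -/
theorem projDim_simples_and_global_dimension {k : Type u} [Field k]
    {A : Type u} [Ring A] [Algebra k A] [FiniteDimensional k A]
    {Λ : Type} [Fintype Λ] (l : Λ → ℕ) (N : ℕ)
    (hl : ∀ lam, l lam ≤ N)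
    (L Δ : Λ → Type u)
    [∀ lam, AddCommGroup (L lam)] [∀ lam, Module A (L lam)]
    [∀ lam, AddCommGroup (Δ lam)] [∀ lam, Module A (Δ lam)]
    (hsimple : ∀ lam, IsSimpleModule A (L lam))
    (hall : ∀ (S : Type u) [AddCommGroup S] [Module A S], IsSimpleModule A S →
      ∃ lam, Nonempty (S ≃ₗ[A] L lam))
    (hpdΔ : ∀ lam, pdLE A (l lam) (Δ lam))
    (π : ∀ lam, Δ lam →ₗ[A] L lam)
    (hπ : ∀ lam, Function.Surjective (π lam))
    (hfilt : ∀ lam, ∃ (n : ℕ) (F : Fin (n + 1) → Submodule A (LinearMap.ker (π lam))),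
      Monotone F ∧ F 0 = ⊥ ∧ F (Fin.last n) = ⊤ ∧
      ∀ i : Fin n, ∃ μ, l lam < l μ ∧
        Nonempty ((↥(F i.succ) ⧸
          Submodule.comap (F i.succ).subtype (F i.castSucc)) ≃ₗ[A] L μ))
    (htop : ∀ lam, l lam = N → LinearMap.ker (π lam) = ⊥) :
    (∀ lam, pdLE A (2 * N - l lam) (L lam)) ∧
    (∀ (M : Type u) [AddCommGroup M] [Module A M], pdLE A (2 * N) M) := by
  -- Part 1: simples
  have base : ∀ lam, l lam = N → pdLE A (2 * N - l lam) (L lam) := by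
    intro lam hlam
    have hinj : Function.Injective (π lam) := by
      rw [← LinearMap.ker_eq_bot]; exact htop lam hlam
    have e := LinearEquiv.ofBijective (π lam) ⟨hinj, hπ lam⟩
    exact pdLE_mono (by omega) (pdLE_of_equiv e (hpdΔ lam))
  have main : ∀ d : ℕ, ∀ lam, N - l lam ≤ d → pdLE A (2 * N - l lam) (L lam) := by
    intro d
    induction d with
    | zero =>
      intro lam hd
      exact base lam (by have := hl lam; omega)
    | succ d ih =>
      intro lam hd
      rcases eq_or_lt_of_le (hl lam) with heq | hlt
      · exact base lam heq
      · obtain ⟨n, F, hmono, h0, hlast, hfac⟩ := hfilt lam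
        have hker : pdLE A (2 * N - l lam - 1) ↥(LinearMap.ker (π lam)) := by
          apply pdLE_of_filtration F hmono h0 hlast
          intro i
          obtain ⟨μ, hμ, ⟨e⟩⟩ := hfac i
          have hNμ : N - l μ ≤ d := by have := hl μ; omega
          exact pdLE_of_equiv e.symm
            (pdLE_mono (by have := hl μ; omega) (ih μ hNμ))
        have hΔ : pdLE A (2 * N - l lam - 1) (Δ lam) :=
          pdLE_mono (by omega) (hpdΔ lam)
        have hq := pdLE_quot (2 * N - l lam - 1) _ _ _
          (LinearMap.ker (π lam)).subtype (π lam)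
          (Submodule.injective_subtype _) (hπ lam)
          (Submodule.range_subtype _) hker hΔ
        have harith : 2 * N - l lam - 1 + 1 = 2 * N - l lam := by omega
        rw [harith] at hq
        exact hq
  have part1 : ∀ lam, pdLE A (2 * N - l lam) (L lam) :=
    fun lam => main (N - l lam) lam le_rfl
  refine ⟨part1, ?_⟩
  -- Part 2: global dimension
  haveI : IsNoetherian A A := isNoetherian_of_tower k inferInstance
  haveI : IsArtinian A A := isArtinian_of_tower k inferInstance
  obtain ⟨m, S, hSmono, hS0, hSlast, hSss⟩ := exists_semisimple_filtration A A
  intro M _ _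
  apply pdLE_of_simples A (2 * N) ?hsimp m S hSmono hS0 hSlast hSss M
  intro W _ _ hW
  obtain ⟨lam, ⟨e⟩⟩ := hall W hW
  exact pdLE_of_equiv e.symm (pdLE_mono (by omega) (part1 lam))
end

section
/- In the symmetric group $S_n$, every Kazhdan–Lusztig two-sided cell contains an element of the form $w_0^S$, the longest element of some standard parabolic (Young) subgroup $W_S$. -/
/-- The one-line word of a permutation of `Fin n`, with values in `{1, …, n}`. -/
def permWord {n : ℕ} (w : Equiv.Perm (Fin n)) : List ℕ :=
  List.ofFn (fun i => (w i).val + 1)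

/-! ### basic getD helpers -/
lemma getD_set_self (l : List ℕ) {i : ℕ} (x : ℕ) (h : i < l.length) :
    (l.set i x).getD i 0 = x := by
  simp [List.getD_eq_getElem?_getD, List.getElem?_set, h]
lemma getD_set_ne (l : List ℕ) {i j : ℕ} (x : ℕ) (h : i ≠ j) :
    (l.set i x).getD j 0 = l.getD j 0 := by
  simp [List.getD_eq_getElem?_getD, List.getElem?_set, h]
lemma getD_eq_getElem' (l : List ℕ) {i : ℕ} (h : i < l.length) : l.getD i 0 = l[i] :=
  List.getD_eq_getElem l 0 h
/-! ### rsInsertRow spec -/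
lemma rsInsertRow_none {r : List ℕ} {x : ℕ} {r' : List ℕ}
    (h : rsInsertRow r x = (r', none)) : r' = r ++ [x] ∧ ∀ y ∈ r, ¬ x < y := by
  unfold rsInsertRow at h
  rcases hf : r.findIdx? (fun y => decide (x < y)) with _ | i
  · rw [hf] at h
    refine ⟨by simpa using congrArg Prod.fst h.symm, ?_⟩
    intro y hy
    have := List.findIdx?_eq_none_iff.mp hf y hy
    simpa using this
  · rw [hf] at h; simp at h
lemma rsInsertRow_some {r : List ℕ} {x : ℕ} {r' : List ℕ} {y : ℕ}
    (h : rsInsertRow r x = (r', some y)) :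
    ∃ i : ℕ, ∃ hi : i < r.length, r' = r.set i x ∧ y = r[i] ∧ x < y ∧
      ∀ j (hj : j < i), r[j]'(hj.trans hi) ≤ x := by
  unfold rsInsertRow at h
  rcases hf : r.findIdx? (fun y => decide (x < y)) with _ | i
  · rw [hf] at h; simp at h
  · rw [hf] at h
    obtain ⟨hi, hpi, hlt⟩ := List.findIdx?_eq_some_iff_getElem.mp hf
    obtain ⟨h1, h2⟩ := Prod.mk.injEq .. ▸ h
    refine ⟨i, hi, h1.symm, ?_, ?_, ?_⟩
    · have : y = r.getD i 0 := by simpa using h2.symm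
      rw [this, getD_eq_getElem' r hi]
    · have : y = r.getD i 0 := by simpa using h2.symm
      rw [this, getD_eq_getElem' r hi]; simpa using hpi
    · intro j hj
      have := hlt j hj
      simpa using this
/-! ### invariants -/
def dominates (r s : List ℕ) : Prop :=
  s.length ≤ r.length ∧ ∀ j < s.length, r.getD j 0 < s.getD j 0
def InvT (t : List (List ℕ)) : Prop :=
  (∀ r ∈ t, List.Pairwise (· < ·) r ∧ r ≠ []) ∧ t.IsChain dominates
def setPut (r : List ℕ) (e x : ℕ) : List ℕ := if e < r.length then r.set e x else r ++ [x]
def incAt (k : ℕ) (s : List ℕ) : List ℕ :=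
  if k < s.length then s.set k (s.getD k 0 + 1) else s ++ [1]
lemma setPut_length {r : List ℕ} {e : ℕ} (x : ℕ) (he : e ≤ r.length) :
    (setPut r e x).length = if e < r.length then r.length else r.length + 1 := by
  unfold setPut; split <;> simp
lemma setPut_getD_self {r : List ℕ} {e : ℕ} (x : ℕ) (he : e ≤ r.length) :
    (setPut r e x).getD e 0 = x := by
  unfold setPut; split
  · exact getD_set_self r x ‹_›
  · have : e = r.length := le_antisymm he (not_lt.mp ‹_›)
    subst this
    rw [List.getD_append_right _ _ _ _ le_rfl]
    simp
lemma setPut_getD_ne {r : List ℕ} {e j : ℕ} (x : ℕ) (hne : j ≠ e) (hj : j < r.length) :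
    (setPut r e x).getD j 0 = r.getD j 0 := by
  unfold setPut; split
  · exact getD_set_ne r x (Ne.symm hne)
  · exact List.getD_append _ _ _ _ hj
lemma perm_set_out (r : List ℕ) : ∀ (i : ℕ) (hi : i < r.length) (x : ℕ) (G : List ℕ),
    (r.set i x ++ r[i] :: G).Perm (x :: (r ++ G)) := by
  induction r with
  | nil => intro i hi; simp at hi
  | cons a r ih =>
    intro i hi x G
    cases i with
    | zero =>
      simp only [List.set_cons_zero, List.getElem_cons_zero, List.cons_append]
      exact List.perm_middle.cons x
    | succ i =>
      simp only [List.set_cons_succ, List.getElem_cons_succ, List.cons_append]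
      have h1 := ih i (by simpa using hi) x G
      exact (h1.cons a).trans (List.Perm.swap x a _)
lemma rsInsertTab_cons (r : List ℕ) (rs : List (List ℕ)) (x : ℕ) :
    rsInsertTab (r :: rs) x =
      match rsInsertRow r x with
      | (r', none) => (r' :: rs, 0)
      | (r', some y) => (r' :: (rsInsertTab rs y).1, (rsInsertTab rs y).2 + 1) := by
  rw [rsInsertTab]
lemma rsInsertTab_cons_none {r : List ℕ} {rs : List (List ℕ)} {x : ℕ} {r' : List ℕ}
    (h : rsInsertRow r x = (r', none)) : rsInsertTab (r :: rs) x = (r' :: rs, 0) := by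
  rw [rsInsertTab_cons, h]
lemma rsInsertTab_cons_some {r : List ℕ} {rs : List (List ℕ)} {x : ℕ} {r' : List ℕ} {y : ℕ}
    (h : rsInsertRow r x = (r', some y)) :
    rsInsertTab (r :: rs) x = (r' :: (rsInsertTab rs y).1, (rsInsertTab rs y).2 + 1) := by
  rw [rsInsertTab_cons, h]
lemma rsInsertRow_of_findIdx?_none {r : List ℕ} {x : ℕ}
    (h : r.findIdx? (fun y => decide (x < y)) = none) : rsInsertRow r x = (r ++ [x], none) := by
  unfold rsInsertRow; rw [h]
lemma rsInsertRow_of_findIdx?_some {r : List ℕ} {x i : ℕ}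
    (h : r.findIdx? (fun y => decide (x < y)) = some i) :
    rsInsertRow r x = (r.set i x, some (r.getD i 0)) := by
  unfold rsInsertRow; rw [h]
lemma tabShape_cons (r : List ℕ) (t : List (List ℕ)) :
    tabShape (r :: t) = r.length :: tabShape t := rfl
lemma incAt_succ_cons (k : ℕ) (a : ℕ) (s : List ℕ) :
    incAt (k+1) (a :: s) = a :: incAt k s := by
  unfold incAt
  by_cases hk : k < s.length
  · rw [if_pos (by simpa using Nat.succ_lt_succ hk), if_pos hk]
    simp
  · rw [if_neg (by simpa using fun h => hk (Nat.lt_of_succ_lt_succ h)), if_neg hk]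
    simp
theorem insertTab_spec : ∀ (t : List (List ℕ)) (x : ℕ), InvT t → (x :: t.flatten).Nodup →
    InvT (rsInsertTab t x).1 ∧
    (rsInsertTab t x).1.flatten.Perm (x :: t.flatten) ∧
    (rsInsertTab t x).2 ≤ t.length ∧
    tabShape (rsInsertTab t x).1 = incAt (rsInsertTab t x).2 (tabShape t) ∧
    ∃ e ≤ (t.headD []).length, (∀ j < e, (t.headD []).getD j 0 < x) ∧
      (rsInsertTab t x).1.headD [] = setPut (t.headD []) e x
  | [], x, _, _ => by
    simp only [rsInsertTab]
    refine ⟨⟨by simp, by simp⟩, by simp, by simp, by simp [tabShape, incAt],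
      0, by simp, by simp, by simp [setPut]⟩
  | r :: rs, x, hInv, hnd => by
    obtain ⟨hrows, hchain⟩ := hInv
    obtain ⟨hsr, hrne⟩ := hrows r (by simp)
    have hdomh : ∀ b ∈ rs.head?, dominates r b := (List.isChain_cons.mp hchain).1
    have hchrs : rs.Chain' dominates := (List.isChain_cons.mp hchain).2
    have hxflat : x ∉ (r :: rs).flatten := (List.nodup_cons.mp hnd).1
    have hxr : x ∉ r := fun h => hxflat (by simp [List.mem_flatten]; exact Or.inl h)
    have hndtail : ((r :: rs).flatten).Nodup := (List.nodup_cons.mp hnd).2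
    rcases hI : rsInsertRow r x with ⟨r', o⟩
    cases o with
    | none =>
      obtain ⟨hr', hall⟩ := rsInsertRow_none hI
      subst hr'
      have halllt : ∀ y ∈ r, y < x := fun y hy =>
        lt_of_le_of_ne (not_lt.mp (hall y hy)) (fun h => hxr (h ▸ hy))
      rw [rsInsertTab_cons, hI]
      simp only [List.headD_cons]
      refine ⟨⟨?_, ?_⟩, ?_, by simp, ?_, r.length, le_rfl, ?_, ?_⟩
      · intro s hs
        rcases List.mem_cons.mp hs with hs | hs
        · subst hs
          constructor
          · refine List.pairwise_append.mpr ⟨hsr, by simp, ?_⟩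
            intro a ha b hb
            simp at hb; subst hb; exact halllt a ha
          · simp
        · exact hrows s (by simp [hs])
      · refine List.isChain_cons.mpr ⟨?_, hchrs⟩
        intro b hb
        obtain ⟨h1, h2⟩ := hdomh b hb
        refine ⟨h1.trans (by simp), fun j hj => ?_⟩
        rw [List.getD_append _ _ _ _ (hj.trans_le h1)]
        exact h2 j hj
      · simp only [List.flatten_cons, List.append_assoc, List.singleton_append]
        exact List.perm_middle
      · rw [tabShape_cons, tabShape_cons]
        simp only [incAt, List.length_append, List.length_singleton]
        rw [if_pos (by simp)]
        simp
      · intro j hj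
        rw [getD_eq_getElem' r hj]
        exact halllt _ (List.getElem_mem hj)
      · simp [setPut]
    | some y =>
      obtain ⟨i, hi, hr', hy, hxy, hprev⟩ := rsInsertRow_some hI
      subst hr'
      have hprevlt : ∀ j (hj : j < i), r[j]'(hj.trans hi) < x := fun j hj =>
        lt_of_le_of_ne (hprev j hj) (fun h => hxr (h ▸ List.getElem_mem (hj.trans hi)))
      have hyr : y ∈ r := hy ▸ List.getElem_mem hi
      have hndy : (y :: rs.flatten).Nodup := by
        have h1 : (r ++ rs.flatten).Nodup := by simpa using hndtail
        refine List.nodup_cons.mpr ⟨?_, (List.nodup_append.mp h1).2.1⟩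
        exact fun hmem => ((List.nodup_append'.mp h1).2.2) hyr hmem
      obtain ⟨hInv2, hperm2, hk2, hshape2, e, he, hlt_e, hhead2⟩ :=
        insertTab_spec rs y (⟨fun s hs => hrows s (by simp [hs]), hchrs⟩) hndy
      set t2 := (rsInsertTab rs y).1 with ht2
      set k2 := (rsInsertTab rs y).2 with hk2def
      set h0 := rs.headD [] with hh0
      have hdom0 : dominates r h0 := by
        cases rs with
        | nil => exact ⟨by simp [hh0], by simp [hh0]⟩
        | cons a l => exact hdomh a (by simp [hh0])
      have he_le_i : e ≤ i := by
        by_contra hcon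
        push_neg at hcon
        have hilen : i < h0.length := hcon.trans_le he
        have h1 : r.getD i 0 < h0.getD i 0 := hdom0.2 i hilen
        have h2 : h0.getD i 0 < y := hlt_e i hcon
        rw [getD_eq_getElem' r hi, ← hy] at h1
        exact absurd (h1.trans h2) (lt_irrefl y)
      have ddom : dominates (r.set i x) (setPut h0 e y) := by
        constructor
        · rw [setPut_length y he, List.length_set]
          split
          · exact hdom0.1
          · have : e = h0.length := le_antisymm he (not_lt.mp ‹_›)
            omega
        · intro j hj
          rw [setPut_length y he] at hj
          have hjlen : j ≠ e → j < h0.length := by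
            intro hne
            split at hj
            · exact hj
            · have : e = h0.length := le_antisymm he (not_lt.mp ‹_›)
              omega
          by_cases hje : j = e
          · subst hje
            rw [setPut_getD_self y he]
            by_cases hji : j = i
            · subst hji; rw [getD_set_self r x hi]; exact hxy
            · have hjlt : j < i := lt_of_le_of_ne he_le_i hji
              rw [getD_set_ne r x (Ne.symm hji), getD_eq_getElem' r (hjlt.trans hi)]
              exact (hprevlt j hjlt).trans hxy
          · rw [setPut_getD_ne y hje (hjlen hje)]
            by_cases hji : j = i
            · subst hji
              rw [getD_set_self r x hi]
              have h1 : r.getD j 0 < h0.getD j 0 := hdom0.2 j (hjlen hje)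
              rw [getD_eq_getElem' r hi, ← hy] at h1
              exact hxy.trans h1
            · rw [getD_set_ne r x (Ne.symm hji)]
              exact hdom0.2 j (hjlen hje)
      rw [rsInsertTab_cons, hI]
      simp only [List.headD_cons]
      refine ⟨⟨?_, ?_⟩, ?_, by simpa using Nat.succ_le_succ hk2, ?_, i, le_of_lt hi, ?_, ?_⟩
      · intro s hs
        rcases List.mem_cons.mp hs with hs | hs
        · subst hs
          constructor
          · refine List.pairwise_iff_getElem.mpr ?_
            intro a b ha hb hab
            have ha' : a < r.length := by simpa using ha
            have hb' : b < r.length := by simpa using hb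
            rw [List.getElem_set, List.getElem_set]
            have hsr' := List.pairwise_iff_getElem.mp hsr
            by_cases hbi : b = i
            · subst hbi
              rw [if_neg (by omega), if_pos rfl]
              exact hprevlt a hab
            · by_cases hai : a = i
              · subst hai
                rw [if_pos rfl, if_neg (by omega)]
                have hr : r[a] < r[b] := hsr' a b ha' hb' hab
                exact (hy ▸ hxy).trans hr
              · rw [if_neg (by omega), if_neg (by omega)]
                exact hsr' a b ha' hb' hab
          · intro hcon
            have hlen : r.length = 0 := by
              rw [← List.length_set (as := r) (i := i) (a := x), hcon]; rfl
            omega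
        · exact (hInv2.1) s hs
      · refine List.isChain_cons.mpr ⟨?_, hInv2.2⟩
        intro b hb
        have hbeq : b = t2.headD [] := by
          rw [List.headD_eq_head?_getD, hb]; rfl
        rw [hbeq, hhead2]
        exact ddom
      · simp only [List.flatten_cons]
        refine (hperm2.append_left _).trans ?_
        have := perm_set_out r i hi x rs.flatten
        rw [← hy] at this
        exact this
      · rw [tabShape_cons, tabShape_cons, List.length_set, incAt_succ_cons, hshape2]
      · intro j hj
        rw [getD_eq_getElem' r (hj.trans hi)]
        exact hprevlt j hj
      · simp [setPut, hi]
/-! ### folding insertions over a word -/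
def foldIns (t : List (List ℕ)) (xs : List ℕ) : List (List ℕ) :=
  xs.foldl (fun t x => (rsInsertTab t x).1) t
@[simp] lemma foldIns_nil (t : List (List ℕ)) : foldIns t [] = t := rfl
lemma foldIns_cons (t : List (List ℕ)) (x : ℕ) (xs : List ℕ) :
    foldIns t (x :: xs) = foldIns (rsInsertTab t x).1 xs := rfl
lemma foldIns_append (t : List (List ℕ)) (xs ys : List ℕ) :
    foldIns t (xs ++ ys) = foldIns (foldIns t xs) ys := List.foldl_append ..
lemma rsAux_fst : ∀ (xs : List ℕ) (P Q : List (List ℕ)) (k : ℕ),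
    (rsAux P Q k xs).1 = foldIns P xs
  | [], _, _, _ => rfl
  | x :: xs, P, Q, k => by
    rw [rsAux]
    rcases h : rsInsertTab P x with ⟨P', r⟩
    rw [foldIns_cons, h]
    exact rsAux_fst xs P' _ (k + 1)
lemma sum_incAt (k : ℕ) (s : List ℕ) : (incAt k s).sum = s.sum + 1 := by
  induction s generalizing k with
  | nil => simp [incAt]
  | cons a s ih =>
    cases k with
    | zero => simp [incAt]; ring
    | succ k => rw [incAt_succ_cons]; simp [ih k]; ring
theorem foldIns_spec : ∀ (xs : List ℕ) (t : List (List ℕ)), InvT t → (t.flatten ++ xs).Nodup →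
    InvT (foldIns t xs) ∧ (foldIns t xs).flatten.Perm (t.flatten ++ xs) ∧
    (tabShape (foldIns t xs)).sum = (tabShape t).sum + xs.length
  | [], t, hInv, _ => ⟨hInv, by simp, by simp⟩
  | x :: xs, t, hInv, hnd => by
    have hperm1 : (t.flatten ++ x :: xs).Perm (x :: (t.flatten ++ xs)) := List.perm_middle
    have hnd1 : (x :: (t.flatten ++ xs)).Nodup := hperm1.nodup hnd
    have hndx : (x :: t.flatten).Nodup := by
      refine hnd1.sublist ?_
      exact List.cons_sublist_cons.mpr (List.sublist_append_left _ _)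
    obtain ⟨hInv', hperm', _, hshape', _⟩ := insertTab_spec t x hInv hndx
    have hnd2 : ((rsInsertTab t x).1.flatten ++ xs).Nodup := by
      refine List.Perm.nodup ?_ hnd1
      have : ((x :: t.flatten) ++ xs).Perm ((rsInsertTab t x).1.flatten ++ xs) :=
        (hperm'.symm).append_right xs
      simpa using this
    obtain ⟨hInvF, hpermF, hsumF⟩ := foldIns_spec xs (rsInsertTab t x).1 hInv' hnd2
    refine ⟨by rwa [foldIns_cons], ?_, ?_⟩
    · rw [foldIns_cons]
      refine hpermF.trans ?_
      refine (hperm'.append_right xs).trans ?_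
      have : ((x :: t.flatten) ++ xs) = x :: (t.flatten ++ xs) := rfl
      rw [this]
      exact hperm1.symm
    · rw [foldIns_cons, hsumF, hshape', sum_incAt]
      simp; ring
/-! ### inserting decreasing blocks -/
def appendCol : List (List ℕ) → List ℕ → List (List ℕ)
  | t, [] => t
  | [], v :: vs => [v] :: appendCol [] vs
  | r :: t, v :: vs => (r ++ [v]) :: appendCol t vs
lemma mem_appendCol_flatten {t : List (List ℕ)} {vs : List ℕ} {v : ℕ}
    (h : v ∈ (appendCol t vs).flatten) : v ∈ t.flatten ∨ v ∈ vs := by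
  induction t generalizing vs with
  | nil =>
    induction vs with
    | nil => simp [appendCol] at h
    | cons a vs ih =>
      rw [appendCol] at h
      simp only [List.flatten_cons] at h
      rcases List.mem_append.mp h with h | h
      · simp at h; simp [h]
      · rcases ih h with h | h
        · simp at h
        · simp [h]
  | cons r t ih =>
    cases vs with
    | nil => rw [appendCol] at h; exact Or.inl h
    | cons a vs =>
      rw [appendCol] at h
      simp only [List.flatten_cons] at h
      rcases List.mem_append.mp h with h | h
      · rcases List.mem_append.mp h with h | h
        · exact Or.inl (by simp [h])
        · simp at h; simp [h]
      · rcases ih h with h | h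
        · exact Or.inl (by simp; right; simpa using h)
        · simp [h]
lemma insert_big (t : List (List ℕ)) (x : ℕ) (h : ∀ v ∈ t.flatten, v < x) :
    rsInsertTab t x = ((t.headD [] ++ [x]) :: t.tail, 0) := by
  cases t with
  | nil => simp [rsInsertTab]
  | cons r rs =>
    have hrow : rsInsertRow r x = (r ++ [x], none) := by
      refine rsInsertRow_of_findIdx?_none (List.findIdx?_eq_none_iff.mpr ?_)
      intro y hy
      simpa using not_lt.mpr (le_of_lt (h y (by simp [List.mem_flatten]; exact Or.inl hy)))
    rw [rsInsertTab_cons_none hrow]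
    rfl
lemma insert_stacked : ∀ (j : ℕ) (t₀ : List (List ℕ)) (c : ℕ),
    (∀ v ∈ t₀.flatten, v < c) →
    rsInsertTab (appendCol t₀ (List.range' (c+1) j)) c = (appendCol t₀ (List.range' c (j+1)), j) := by
  intro j
  induction j with
  | zero =>
    intro t₀ c h
    rw [show List.range' (c+1) 0 = [] from rfl, appendCol, insert_big t₀ c h]
    cases t₀ <;> simp [appendCol]
  | succ j ih =>
    intro t₀ c h
    have hr : List.range' (c+1) (j+1) = (c+1) :: List.range' (c+1+1) j := List.range'_succ ..
    have hr2 : List.range' c (j+2) = c :: List.range' (c+1) (j+1) := List.range'_succ ..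
    cases t₀ with
    | nil =>
      rw [hr, appendCol]
      have hrow : rsInsertRow [c+1] c = ([c], some (c+1)) := by
        have hf : List.findIdx? (fun y => decide (c < y)) [c+1] = some 0 := by simp
        rw [rsInsertRow_of_findIdx?_some hf]
        rfl
      rw [rsInsertTab_cons_some hrow, ih [] (c+1) (by simp), hr2, appendCol]
    | cons r t =>
      rw [hr, appendCol]
      have hvr : ∀ v ∈ r, v < c := fun v hv => h v (by simp [List.mem_flatten]; exact Or.inl hv)
      have hf : (r ++ [c+1]).findIdx? (fun y => decide (c < y)) = some r.length := by
        refine List.findIdx?_eq_some_iff_getElem.mpr ?_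
        refine ⟨by simp, ?_, ?_⟩
        · have h1 : (r ++ [c+1])[r.length] = c+1 := by
            rw [List.getElem_append_right le_rfl]
            simp
          simp [h1]
        · intro j hj
          have h1 : (r ++ [c+1])[j]'(by simp; omega) = r[j] := by
            rw [List.getElem_append_left hj]
          rw [h1]
          simp
          exact le_of_lt (hvr _ (List.getElem_mem hj))
      have hrow : rsInsertRow (r ++ [c+1]) c = (r ++ [c], some (c+1)) := by
        rw [rsInsertRow_of_findIdx?_some hf]
        have h1 : (r ++ [c+1]).set r.length c = r ++ [c] := by
          rw [List.set_append, if_neg (by omega)]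
          simp
        have h2 : (r ++ [c+1]).getD r.length 0 = c+1 := by
          rw [List.getD_append_right _ _ _ _ le_rfl]
          simp
        rw [h1, h2]
      rw [rsInsertTab_cons_some hrow]
      have ht : ∀ v ∈ t.flatten, v < c + 1 :=
        fun v hv => (h v (by simp [List.mem_flatten] at hv ⊢; right; exact hv)).trans (by omega)
      rw [ih t (c+1) ht, hr2, appendCol]
lemma block_fold : ∀ (m : ℕ) (c j : ℕ) (t₀ : List (List ℕ)), (∀ v ∈ t₀.flatten, v < c) →
    foldIns (appendCol t₀ (List.range' (c+m) j)) ((List.range' c m).reverse)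
      = appendCol t₀ (List.range' c (m+j)) := by
  intro m
  induction m with
  | zero => intro c j t₀ h; simp
  | succ m ih =>
    intro c j t₀ h
    rw [List.range'_1_concat, List.reverse_append, List.reverse_singleton]
    simp only [List.singleton_append]
    rw [foldIns_cons]
    have h1 : c + (m+1) = (c + m) + 1 := by ring
    rw [h1, insert_stacked j t₀ (c+m) (fun v hv => (h v hv).trans_le (Nat.le_add_right c m))]
    simp only []
    rw [ih c (j+1) t₀ h, show m + (j+1) = m + 1 + j from by omega]
/-! ### shape bookkeeping -/
def incFirst : ℕ → List ℕ → List ℕ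
  | 0, s => s
  | p+1, [] => List.replicate (p+1) 1
  | p+1, a :: s => (a+1) :: incFirst p s
lemma incFirst_nil (n : ℕ) : incFirst n [] = List.replicate n 1 := by
  cases n <;> rfl
lemma appendCol_shape : ∀ (t : List (List ℕ)) (vs : List ℕ),
    tabShape (appendCol t vs) = incFirst vs.length (tabShape t)
  | t, [] => by cases t <;> rfl
  | [], v :: vs => by
    rw [appendCol, tabShape_cons, appendCol_shape [] vs]
    simp [tabShape, incFirst_nil, List.replicate_succ]
  | r :: t, v :: vs => by
    rw [appendCol, tabShape_cons, appendCol_shape t vs, tabShape_cons]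
    simp [incFirst]
lemma young_block (off p : ℕ) :
    (List.range p).reverse.map (fun j => off + j + 1) = (List.range' (off+1) p).reverse := by
  rw [List.map_reverse]
  congr 1
  have h1 : (List.range p).map (fun j => off + j + 1) = (List.range p).map (fun j => (off+1) + j) := by
    apply List.map_congr_left
    intro a _
    omega
  rw [h1, List.range_eq_range', List.map_add_range']
theorem young_fold : ∀ (lam : List ℕ) (off : ℕ) (t₀ : List (List ℕ)),
    (∀ v ∈ t₀.flatten, v ≤ off) →
    (∀ v ∈ (foldIns t₀ (youngLongestWord off lam)).flatten, v ≤ off + lam.sum) ∧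
    tabShape (foldIns t₀ (youngLongestWord off lam))
      = List.foldl (fun s p => incFirst p s) (tabShape t₀) lam
  | [], off, t₀, h => by
    constructor
    · intro v hv
      rw [youngLongestWord] at hv
      simpa using (h v (by simpa using hv)).trans (Nat.le_add_right off 0)
    · rw [youngLongestWord]; rfl
  | p :: rest, off, t₀, h => by
    rw [youngLongestWord, foldIns_append, young_block]
    have hlt : ∀ v ∈ t₀.flatten, v < off + 1 := fun v hv => Nat.lt_succ_of_le (h v hv)
    have hb := block_fold p (off+1) 0 t₀ hlt
    rw [show appendCol t₀ (List.range' (off + 1 + p) 0) = t₀ from by cases t₀ <;> rfl] at hb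
    rw [hb]
    have hcol : ∀ v ∈ (appendCol t₀ (List.range' (off+1) (p+0))).flatten, v ≤ off + p := by
      intro v hv
      rcases mem_appendCol_flatten hv with hv | hv
      · exact (h v hv).trans (Nat.le_add_right off p)
      · have := List.mem_range'_1.mp hv
        omega
    obtain ⟨ih1, ih2⟩ := young_fold rest (off + p) (appendCol t₀ (List.range' (off+1) (p+0))) hcol
    refine ⟨?_, ?_⟩
    · intro v hv
      have := ih1 v hv
      simp only [List.sum_cons]
      omega
    · rw [ih2, appendCol_shape]
      simp [List.length_range']
/-! ### incFirst arithmetic -/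
lemma incFirst_length : ∀ (p : ℕ) (s : List ℕ), (incFirst p s).length = max p s.length
  | 0, s => by simp [incFirst]
  | p+1, [] => by simp [incFirst]
  | p+1, a :: s => by
    rw [incFirst]
    simp [incFirst_length p s]
lemma getD_replicate' (n v i : ℕ) :
    (List.replicate n v).getD i 0 = if i < n then v else 0 := by
  induction n generalizing i with
  | zero => simp
  | succ n ih =>
    rw [List.replicate_succ]
    cases i with
    | zero => simp
    | succ i => rw [List.getD_cons_succ, ih i]; simp [Nat.succ_lt_succ_iff]
lemma incFirst_getD : ∀ (p : ℕ) (s : List ℕ) (i : ℕ),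
    (incFirst p s).getD i 0 = s.getD i 0 + (if i < p then 1 else 0)
  | 0, s, i => by simp [incFirst]
  | p+1, [], i => by
    rw [incFirst, getD_replicate']
    simp
  | p+1, a :: s, i => by
    rw [incFirst]
    cases i with
    | zero => simp
    | succ i =>
      simp only [List.getD_cons_succ, incFirst_getD p s i]
      congr 1
      simp [Nat.succ_lt_succ_iff]
lemma fold_length : ∀ (lam : List ℕ) (s : List ℕ),
    (List.foldl (fun s p => incFirst p s) s lam).length = max s.length (lam.foldr max 0)
  | [], s => by simp
  | p :: rest, s => by
    rw [List.foldl_cons, fold_length rest (incFirst p s), incFirst_length]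
    simp only [List.foldr_cons]
    omega
lemma fold_getD : ∀ (lam : List ℕ) (s : List ℕ) (i : ℕ),
    (List.foldl (fun s p => incFirst p s) s lam).getD i 0
      = s.getD i 0 + lam.countP (fun p => decide (i < p))
  | [], s, i => by simp
  | p :: rest, s, i => by
    rw [List.foldl_cons, fold_getD rest (incFirst p s) i, incFirst_getD, List.countP_cons]
    by_cases h : i < p <;> simp [h] <;> omega
lemma conj_length (lam : List ℕ) : (conjPartition lam).length = lam.foldr max 0 := by
  simp [conjPartition]
lemma le_foldr_max {l : List ℕ} {p : ℕ} (h : p ∈ l) : p ≤ l.foldr max 0 := by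
  induction l with
  | nil => simp at h
  | cons a rest ih =>
    rcases List.mem_cons.mp h with h | h
    · subst h; simp
    · exact le_trans (ih h) (by simp)
lemma foldr_max_le {l : List ℕ} {B : ℕ} (h : ∀ p ∈ l, p ≤ B) : l.foldr max 0 ≤ B := by
  induction l with
  | nil => simp
  | cons a rest ih =>
    simp only [List.foldr_cons, max_le_iff]
    exact ⟨h a (by simp), ih (fun p hp => h p (by simp [hp]))⟩
lemma exists_gt_of_lt_foldr_max {l : List ℕ} {i : ℕ} (h : i < l.foldr max 0) :
    ∃ p ∈ l, i < p := by
  induction l with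
  | nil => simp at h
  | cons a rest ih =>
    simp only [List.foldr_cons, lt_max_iff] at h
    rcases h with h | h
    · exact ⟨a, by simp, h⟩
    · obtain ⟨p, hp, hip⟩ := ih h
      exact ⟨p, by simp [hp], hip⟩
lemma conj_getD (lam : List ℕ) (i : ℕ) :
    (conjPartition lam).getD i 0
      = if i < lam.foldr max 0 then lam.countP (fun p => decide (i < p)) else 0 := by
  rw [conjPartition, List.getD_eq_getElem?_getD, List.getElem?_map]
  by_cases h : i < lam.foldr max 0
  · rw [List.getElem?_eq_getElem (by simpa using h)]
    simp [h]
  · rw [List.getElem?_eq_none (by simpa using not_lt.mp h)]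
    simp [h]
lemma countP_eq_zero_of_ge {lam : List ℕ} {i : ℕ} (h : lam.foldr max 0 ≤ i) :
    lam.countP (fun p => decide (i < p)) = 0 :=
  List.countP_eq_zero.mpr (fun p hp => by simpa using le_trans (le_foldr_max hp) h)
lemma fold_eq_conj (lam : List ℕ) :
    List.foldl (fun s p => incFirst p s) [] lam = conjPartition lam := by
  refine List.ext_getElem ?_ ?_
  · rw [fold_length, conj_length]; simp
  · intro i h1 h2
    rw [← getD_eq_getElem' _ h1, ← getD_eq_getElem' _ h2, fold_getD, conj_getD]
    rw [conj_length] at h2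
    simp [h2]
lemma countP_range_lt (M v : ℕ) :
    (List.range M).countP (fun i => decide (i < v)) = min v M := by
  induction M with
  | zero => simp
  | succ M ih =>
    rw [List.range_succ, List.countP_append, ih]
    by_cases h : M < v <;> simp [h] <;> omega
lemma sum_map_add (l : List ℕ) (f g : ℕ → ℕ) :
    (l.map (fun i => f i + g i)).sum = (l.map f).sum + (l.map g).sum := by
  induction l with
  | nil => simp
  | cons a l ih => simp [ih]; omega
lemma sum_map_indicator (M p : ℕ) :
    ((List.range M).map (fun i => if i < p then 1 else 0)).sum = min p M := by
  induction M with
  | zero => simp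
  | succ M ih =>
    rw [List.range_succ, List.map_append, List.sum_append, ih]
    by_cases h : M < p <;> simp [h] <;> omega
lemma sum_map_countP : ∀ (l : List ℕ) (M : ℕ), (∀ p ∈ l, p ≤ M) →
    ((List.range M).map (fun i => l.countP (fun p => decide (i < p)))).sum = l.sum
  | [], M, _ => by simp
  | p :: rest, M, h => by
    have h1 : ∀ i, (p :: rest).countP (fun p => decide (i < p))
        = rest.countP (fun q => decide (i < q)) + (if i < p then 1 else 0) := by
      intro i
      rw [List.countP_cons]
      by_cases hip : i < p <;> simp [hip]
    simp only [h1]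
    rw [sum_map_add, sum_map_countP rest M (fun q hq => h q (by simp [hq])), sum_map_indicator]
    have : p ≤ M := h p (by simp)
    simp [List.sum_cons, min_eq_left this]
    omega
lemma conj_sum (lam : List ℕ) : (conjPartition lam).sum = lam.sum := by
  rw [conjPartition]
  have h1 : ∀ i, (fun i => lam.countP (fun p => i < p)) i
      = (fun i => lam.countP (fun p => decide (i < p))) i := fun i => rfl
  exact sum_map_countP lam (lam.foldr max 0) (fun p hp => le_foldr_max hp)
lemma conj_pos (lam : List ℕ) : ∀ q ∈ conjPartition lam, 0 < q := by
  intro q hq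
  rw [conjPartition] at hq
  obtain ⟨i, hi, hq⟩ := List.mem_map.mp hq
  obtain ⟨p, hp, hip⟩ := exists_gt_of_lt_foldr_max (List.mem_range.mp hi)
  subst hq
  exact List.countP_pos_iff.mpr ⟨p, hp, by simpa using hip⟩
lemma lt_countP_iff : ∀ (s : List ℕ), List.Pairwise (fun a b => b ≤ a) s → ∀ (i j : ℕ),
    (j < s.countP (fun p => decide (i < p)) ↔ ∃ h : j < s.length, i < s[j])
  | [], _, i, j => by simp
  | a :: rest, hs, i, j => by
    obtain ⟨ha, hrest⟩ := List.pairwise_cons.mp hs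
    by_cases hia : i < a
    · have hc : (a :: rest).countP (fun p => decide (i < p))
          = rest.countP (fun p => decide (i < p)) + 1 := by
        rw [List.countP_cons]; simp [hia]
      rw [hc]
      cases j with
      | zero =>
        simp only [List.length_cons, List.getElem_cons_zero]
        constructor
        · intro _; exact ⟨Nat.succ_pos _, hia⟩
        · intro _; omega
      | succ j =>
        have hstep : j + 1 < rest.countP (fun p => decide (i < p)) + 1
            ↔ j < rest.countP (fun p => decide (i < p)) := by omega
        rw [hstep, lt_countP_iff rest hrest i j]
        constructor
        · rintro ⟨h, hlt⟩
          refine ⟨by simpa using Nat.succ_lt_succ h, ?_⟩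
          simpa using hlt
        · rintro ⟨h, hlt⟩
          exact ⟨Nat.lt_of_succ_lt_succ (by simpa using h), by simpa using hlt⟩
    · have hz : rest.countP (fun p => decide (i < p)) = 0 :=
        List.countP_eq_zero.mpr (fun p hp => by simpa using le_trans (ha p hp) (not_lt.mp hia))
      have hc : (a :: rest).countP (fun p => decide (i < p)) = 0 := by
        rw [List.countP_cons, hz]; simp [hia]
      rw [hc]
      constructor
      · intro h; omega
      · rintro ⟨h, hlt⟩
        exfalso
        cases j with
        | zero => simp at hlt; omega
        | succ j =>
          have he : (a :: rest)[j+1] = rest[j]'(by simpa using h) := by simp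
          rw [he] at hlt
          have := ha _ (List.getElem_mem (show j < rest.length by simpa using h))
          omega
lemma conj_conj (s : List ℕ) (hpos : ∀ p ∈ s, 0 < p)
    (hsort : List.Pairwise (fun a b : ℕ => b ≤ a) s) :
    conjPartition (conjPartition s) = s := by
  set M := s.foldr max 0 with hM
  have hlen : (conjPartition s).foldr max 0 = s.length := by
    apply le_antisymm
    · exact foldr_max_le (by
        intro e he
        rw [conjPartition] at he
        obtain ⟨i, _, he⟩ := List.mem_map.mp he
        exact he ▸ List.countP_le_length)
    · cases s with
      | nil => simp
      | cons a rest =>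
        have hmem : (a :: rest).countP (fun p => (0:ℕ) < p) ∈ conjPartition (a :: rest) := by
          rw [conjPartition]
          refine List.mem_map.mpr ⟨0, ?_, rfl⟩
          refine List.mem_range.mpr ?_
          have h1 : 0 < a := hpos a (by simp)
          have h2 : a ≤ M := le_foldr_max (by simp)
          omega
        have hcnt : (a :: rest).countP (fun p => (0:ℕ) < p) = (a :: rest).length := by
          refine List.countP_eq_length.mpr ?_
          intro p hp
          simpa using hpos p hp
        exact hcnt ▸ le_foldr_max hmem
  refine List.ext_getElem ?_ ?_
  · rw [conj_length, hlen]
  · intro i h1 h2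
    rw [← getD_eq_getElem' _ h1, ← getD_eq_getElem' _ h2]
    rw [conj_getD, hlen, if_pos h2]
    rw [conjPartition, List.countP_map]
    have hcongr : (List.range M).countP
          ((fun c => decide (i < c)) ∘ (fun t => s.countP (fun p => t < p)))
        = (List.range M).countP (fun t => decide (t < s[i]'h2)) := by
      refine List.countP_congr ?_
      intro t _
      simp only [Function.comp_apply, decide_eq_true_eq]
      have hiff := lt_countP_iff s hsort t i
      constructor
      · intro h; exact (hiff.mp h).2
      · intro h; exact hiff.mpr ⟨h2, h⟩
    rw [hcongr, countP_range_lt]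
    have hle : s[i] ≤ M := le_foldr_max (List.getElem_mem h2)
    rw [getD_eq_getElem' s h2]
    exact min_eq_left hle
/-! ### the Young word is a permutation -/
lemma young_perm : ∀ (lam : List ℕ) (off : ℕ),
    (youngLongestWord off lam).Perm (List.range' (off+1) lam.sum)
  | [], off => by simp [youngLongestWord]
  | p :: rest, off => by
    rw [youngLongestWord, young_block]
    have h1 : (List.range' (off+1) p).reverse.Perm (List.range' (off+1) p) :=
      List.reverse_perm _
    have h2 := young_perm rest (off + p)
    have h3 := h1.append h2
    refine h3.trans ?_
    have h4 : off + p + 1 = (off + 1) + 1 * p := by ring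
    rw [h4, List.range'_append]
    simp [List.sum_cons]
lemma permWord_nodup {n : ℕ} (w : Equiv.Perm (Fin n)) : (permWord w).Nodup := by
  refine List.nodup_ofFn.mpr ?_
  intro i j hij
  simp only at hij
  have : w i = w j := Fin.val_injective (by omega)
  exact w.injective this
lemma permWord_length {n : ℕ} (w : Equiv.Perm (Fin n)) : (permWord w).length = n := by
  simp [permWord]
lemma InvT_shape_sorted {t : List (List ℕ)} (h : InvT t) :
    List.Pairwise (fun a b : ℕ => b ≤ a) (tabShape t) := by
  have hc : (tabShape t).IsChain (fun a b : ℕ => b ≤ a) := by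
    rw [tabShape, List.isChain_map]
    exact List.IsChain.imp (fun a b hd => hd.1) h.2
  exact List.isChain_iff_pairwise.mp hc
lemma InvT_shape_pos {t : List (List ℕ)} (h : InvT t) : ∀ m ∈ tabShape t, 0 < m := by
  intro m hm
  obtain ⟨r, hr, hm⟩ := List.mem_map.mp hm
  subst hm
  exact List.length_pos_iff.mpr (h.1 r hr).2

/-- In the symmetric group `Sₙ`, every Kazhdan–Lusztig two-sided cell contains an element of
the form `w₀^S`, the longest element of a standard parabolic (Young) subgroup. Here two-sided
cells are described via the Robinson–Schensted correspondence: two permutations lie in the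
same two-sided cell iff their RS tableaux have the same shape. -/
theorem two_sided_cell_contains_parabolic_longest_element (n : ℕ)
    (w : Equiv.Perm (Fin n)) :
    ∃ lam : List ℕ, (∀ p ∈ lam, 0 < p) ∧ lam.sum = n ∧
      ∃ u : Equiv.Perm (Fin n), permWord u = youngLongestWord 0 lam ∧
        tabShape (rsPair (permWord u)).1 = tabShape (rsPair (permWord w)).1 := by
  classical
  set L := permWord w with hL
  have hInv0 : InvT ([] : List (List ℕ)) := ⟨by simp, by simp⟩
  have hnd0 : (([] : List (List ℕ)).flatten ++ L).Nodup := by simpa using permWord_nodup w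
  obtain ⟨hInvP, hpermP, hsumP⟩ := foldIns_spec L [] hInv0 hnd0
  have hPdef : (rsPair L).1 = foldIns [] L := rsAux_fst L [] [] 1
  set s := tabShape (rsPair L).1 with hs
  have hssum : s.sum = n := by
    rw [hs, hPdef, hsumP, hL, permWord_length]
    simp [tabShape]
  have hspos : ∀ m ∈ s, 0 < m := by
    rw [hs, hPdef]; exact InvT_shape_pos hInvP
  have hssort : List.Pairwise (fun a b : ℕ => b ≤ a) s := by
    rw [hs, hPdef]; exact InvT_shape_sorted hInvP
  refine ⟨conjPartition s, conj_pos s, by rw [conj_sum]; exact hssum, ?_⟩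
  set lam := conjPartition s with hlam
  set L2 := youngLongestWord 0 lam with hL2
  have hL2perm : L2.Perm (List.range' 1 n) := by
    have := young_perm lam 0
    rw [show (0:ℕ)+1 = 1 from rfl, show lam.sum = n from by rw [hlam, conj_sum]; exact hssum] at this
    exact this
  have hL2len : L2.length = n := by
    have h := hL2perm.length_eq
    rwa [List.length_range'] at h
  have hL2mem : ∀ v ∈ L2, 1 ≤ v ∧ v < 1 + n := by
    intro v hv
    exact List.mem_range'_1.mp (hL2perm.mem_iff.mp hv)
  have hL2nd : L2.Nodup := hL2perm.symm.nodup (List.nodup_range' (s := 1) (n := n))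
  have hmem : ∀ (i : Fin n), L2[(i:ℕ)]'(by rw [hL2len]; exact i.isLt) - 1 < n := by
    intro i
    have := hL2mem _ (List.getElem_mem (by rw [hL2len]; exact i.isLt))
    omega
  set f : Fin n → Fin n := fun i => ⟨L2[(i:ℕ)]'(by rw [hL2len]; exact i.isLt) - 1, hmem i⟩
    with hf
  have hinj : Function.Injective f := by
    intro i j hij
    have h1 := hL2mem _ (List.getElem_mem (show (i:ℕ) < L2.length by rw [hL2len]; exact i.isLt))
    have h2 := hL2mem _ (List.getElem_mem (show (j:ℕ) < L2.length by rw [hL2len]; exact j.isLt))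
    have h3 : L2[(i:ℕ)]'(by rw [hL2len]; exact i.isLt)
        = L2[(j:ℕ)]'(by rw [hL2len]; exact j.isLt) := by
      have := congrArg Fin.val hij
      simp only [hf] at this
      omega
    have h4 := (List.Nodup.getElem_inj_iff hL2nd).mp h3
    exact Fin.val_injective h4
  have hbij : Function.Bijective f := Finite.injective_iff_bijective.mp hinj
  refine ⟨Equiv.ofBijective f hbij, ?_, ?_⟩
  · refine List.ext_getElem (by simp [permWord, hL2len]) ?_
    intro i h1 h2
    simp only [permWord, List.getElem_ofFn]
    have hival : i < n := by simpa [permWord] using h1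
    have hmem1 := hL2mem _ (List.getElem_mem (show i < L2.length by rw [hL2len]; exact hival))
    show ((f ⟨i, hival⟩ : Fin n) : ℕ) + 1 = L2[i]'(by rw [hL2len]; exact hival)
    rw [hf]
    dsimp only
    omega
  · have hword : permWord (Equiv.ofBijective f hbij) = L2 := by
      refine List.ext_getElem (by simp [permWord, hL2len]) ?_
      intro i h1 h2
      simp only [permWord, List.getElem_ofFn]
      have hival : i < n := by simpa [permWord] using h1
      have hmem1 := hL2mem _ (List.getElem_mem (show i < L2.length by rw [hL2len]; exact hival))
      show ((f ⟨i, hival⟩ : Fin n) : ℕ) + 1 = L2[i]'(by rw [hL2len]; exact hival)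
      rw [hf]
      dsimp only
      omega
    rw [hword]
    have h1 : (rsPair L2).1 = foldIns [] L2 := rsAux_fst L2 [] [] 1
    rw [h1]
    have h2 := (young_fold lam 0 [] (by simp)).2
    rw [← hL2] at h2
    rw [h2]
    show List.foldl (fun s p => incFirst p s) (tabShape []) lam = s
    have h3 : tabShape ([] : List (List ℕ)) = [] := rfl
    rw [h3, fold_eq_conj, hlam, conj_conj s hspos hssort]
end
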